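/- arXiv:1303.1225 — 5 statements merged into one kernel-verified Lean document; each statement's English description precedes it below -/
import Mathlib

section
/- Let θ ∈ [0,1) and let w ∈ V^⊥(θ). Then: (i) w is affine on [α,β], i.e. w(y) = (w(β) − w(α))(β − α)^{-1}(y − α) + w(α) for all y ∈ [α,β]; (ii) if θ ≠ 0 then (β − α)^{-1}(w(β) − w(α)) = (1 − e^{−2πiθ})^{-1}(α + (1 − β)e^{−2πiθ}) ∫_{Q₁} w(y) dy; (iii) if θ = 0 then ∫_{Q₁} w(y) dy = 0. -/
open MeasureTheory Real Set
open scoped ComplexConjugate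

noncomputable section

/-- `u ∈ H¹(0,1)` with (weak) derivative `u'`. -/
def IsH1 (u u' : ℝ → ℂ) : Prop :=
  MemLp u' 2 (volume.restrict (Ioo (0:ℝ) 1)) ∧
  ∀ x ∈ Icc (0:ℝ) 1, u x = u 0 + ∫ t in (0:ℝ)..x, u' t

/-- Membership in `V(θ)`: `θ`-quasiperiodicity together with vanishing of the
derivative a.e. on `Q₁ = (0,α) ∪ (β,1)`. -/
def MemV (α β θ : ℝ) (u u' : ℝ → ℂ) : Prop :=
  u 1 = Complex.exp (2 * Real.pi * Complex.I * θ) * u 0 ∧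
  ∀ᵐ y ∂volume, y ∈ Ioo (0:ℝ) α ∪ Ioo β 1 → u' y = 0

/-- The inner product `⟨u,φ⟩ = (∫_{Q₁} u) conj(∫_{Q₁} φ) + ∫₀¹ u' conj(φ')`. -/
def innerH (α β : ℝ) (u u' φ φ' : ℝ → ℂ) : ℂ :=
  (∫ y in Ioo (0:ℝ) α ∪ Ioo β 1, u y) * conj (∫ y in Ioo (0:ℝ) α ∪ Ioo β 1, φ y) +
    ∫ y in Ioo (0:ℝ) 1, u' y * conj (φ' y)

lemma int_ind_zero (a b x : ℝ) (c : ℂ) (hx : 0 ≤ x) (hxa : x ≤ a) :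
    (∫ t in (0:ℝ)..x, (Ioo a b).indicator (fun _ => c) t) = 0 := by
  rw [intervalIntegral.integral_of_le hx, setIntegral_indicator measurableSet_Ioo]
  have h : Ioc (0:ℝ) x ∩ Ioo a b = ∅ := by
    ext t
    simp only [mem_inter_iff, mem_Ioc, mem_Ioo, mem_empty_iff_false, iff_false, not_and]
    intro h1 h2 h3
    linarith [h1.1, h1.2]
  rw [h]; simp

lemma int_ind_full (a b x : ℝ) (c : ℂ) (h0a : 0 ≤ a) (hab : a ≤ b) (hbx : b ≤ x) :
    (∫ t in (0:ℝ)..x, (Ioo a b).indicator (fun _ => c) t) = ((b - a : ℝ) : ℂ) * c := by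
  rw [intervalIntegral.integral_of_le (le_trans (le_trans h0a hab) hbx),
    setIntegral_indicator measurableSet_Ioo]
  have h : Ioc (0:ℝ) x ∩ Ioo a b = Ioo a b :=
    inter_eq_self_of_subset_right fun t ht => ⟨lt_of_le_of_lt h0a ht.1, le_trans (le_of_lt ht.2) hbx⟩
  rw [h, setIntegral_const, Real.volume_real_Ioo_of_le hab, Complex.real_smul]

lemma II_ind (a b x y : ℝ) (c : ℂ) (hxy : x ≤ y) :
    IntervalIntegrable ((Ioo a b).indicator fun _ => c) volume x y :=
  (intervalIntegrable_iff_integrableOn_Ioc_of_le hxy).mpr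
    ((integrableOn_const measure_Ioc_lt_top.ne).indicator measurableSet_Ioo)

lemma setint_mul_ind (f : ℝ → ℂ) (d : ℂ) (a b : ℝ) (h0 : 0 ≤ a) (hb : b ≤ 1) :
    (∫ y in Ioo (0:ℝ) 1, (Ioo a b).indicator (fun t => f t * d) y)
      = (∫ y in Ioo a b, f y) * d := by
  rw [setIntegral_indicator measurableSet_Ioo]
  have h : Ioo (0:ℝ) 1 ∩ Ioo a b = Ioo a b := by
    apply inter_eq_self_of_subset_right
    intro t ht
    exact ⟨lt_of_le_of_lt h0 ht.1, lt_of_lt_of_le ht.2 hb⟩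
  rw [h, integral_mul_const]

theorem stmt_6 (α β : ℝ) (hα : 0 < α) (hαβ : α < β) (hβ : β < 1)
    (θ : ℝ) (hθ : θ ∈ Ico (0:ℝ) 1)
    (w w' : ℝ → ℂ) (hw : IsH1 w w')
    (hwq : w 1 = Complex.exp (2 * Real.pi * Complex.I * θ) * w 0)
    (hperp : ∀ φ φ' : ℝ → ℂ, IsH1 φ φ' → MemV α β θ φ φ' →
      innerH α β w w' φ φ' = 0) :
    (∀ y ∈ Icc α β,
        w y = (w β - w α) * ((β : ℂ) - α)⁻¹ * ((y : ℂ) - α) + w α) ∧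
    (θ ≠ 0 →
      ((β : ℂ) - α)⁻¹ * (w β - w α) =
        (1 - Complex.exp (-(2 * Real.pi * Complex.I * θ)))⁻¹ *
          ((α : ℂ) + (1 - β) * Complex.exp (-(2 * Real.pi * Complex.I * θ))) *
          ∫ y in Ioo (0:ℝ) α ∪ Ioo β 1, w y) ∧
    (θ = 0 → (∫ y in Ioo (0:ℝ) α ∪ Ioo β 1, w y) = 0) := by
  obtain ⟨hwL2, hwInt⟩ := hw
  haveI : IsFiniteMeasure (volume.restrict (Ioo (0:ℝ) 1)) :=
    ⟨by rw [Measure.restrict_apply_univ]; simp [Real.volume_Ioo]⟩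
  have hInt : IntegrableOn w' (Ioo (0:ℝ) 1) volume := hwL2.integrable (by norm_num)
  have hII : ∀ a b : ℝ, 0 ≤ a → a ≤ b → b < 1 → IntervalIntegrable w' volume a b := by
    intro a b h0 hab hb1
    exact (intervalIntegrable_iff_integrableOn_Ioc_of_le hab).mpr
      (hInt.mono_set fun t ht => ⟨lt_of_le_of_lt h0 ht.1, lt_of_le_of_lt ht.2 hb1⟩)
  have hwdiff : ∀ a b : ℝ, 0 ≤ a → a ≤ b → b < 1 → (∫ y in Ioo a b, w' y) = w b - w a := by
    intro a b h0 hab hb1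
    have ha' := hwInt a ⟨h0, by linarith⟩
    have hb' := hwInt b ⟨by linarith, le_of_lt hb1⟩
    have hadd := intervalIntegral.integral_add_adjacent_intervals
      (hII 0 a le_rfl h0 (by linarith)) (hII a b h0 hab hb1)
    rw [← integral_Ioc_eq_integral_Ioo, ← intervalIntegral.integral_of_le hab, hb', ha', ← hadd]
    ring
  have hQ1meas : MeasurableSet (Ioo (0:ℝ) α ∪ Ioo β 1) :=
    measurableSet_Ioo.union measurableSet_Ioo
  -- affine part: hat test functions
  have key1 : ∀ y₀ ∈ Ioo α β,
      (w y₀ - w α) * ((y₀ - α : ℝ) : ℂ)⁻¹ - (w β - w y₀) * ((β - y₀ : ℝ) : ℂ)⁻¹ = 0 := by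
    intro y₀ hy₀
    have hαy : (0:ℝ) < y₀ - α := by linarith [hy₀.1]
    have hyβ : (0:ℝ) < β - y₀ := by linarith [hy₀.2]
    have hy0pos : (0:ℝ) < y₀ := lt_trans hα hy₀.1
    have hy1 : y₀ < 1 := lt_trans hy₀.2 hβ
    set c₁ : ℂ := ((y₀ - α : ℝ) : ℂ)⁻¹ with hc₁
    set c₂ : ℂ := ((β - y₀ : ℝ) : ℂ)⁻¹ with hc₂
    set ψ' : ℝ → ℂ :=
      fun t => (Ioo α y₀).indicator (fun _ => c₁) t - (Ioo y₀ β).indicator (fun _ => c₂) t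
      with hψ'
    set ψ : ℝ → ℂ := fun x => ∫ t in (0:ℝ)..x, ψ' t with hψ
    have hψint : ∀ x, 0 ≤ x → ψ x =
        (∫ t in (0:ℝ)..x, (Ioo α y₀).indicator (fun _ => c₁) t)
          - ∫ t in (0:ℝ)..x, (Ioo y₀ β).indicator (fun _ => c₂) t := by
      intro x hx
      rw [hψ]
      exact intervalIntegral.integral_sub (II_ind _ _ _ _ _ hx) (II_ind _ _ _ _ _ hx)
    have hψ0 : ∀ x ∈ Icc (0:ℝ) α, ψ x = 0 := by
      intro x hx
      rw [hψint x hx.1, int_ind_zero _ _ _ _ hx.1 hx.2,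
        int_ind_zero _ _ _ _ hx.1 (le_trans hx.2 (le_of_lt hy₀.1))]
      ring
    have hψ1 : ∀ x ∈ Icc β 1, ψ x = 0 := by
      intro x hx
      have h0x : (0:ℝ) ≤ x := by linarith [hx.1]
      rw [hψint x h0x,
        int_ind_full α y₀ x c₁ (le_of_lt hα) (le_of_lt hy₀.1) (le_trans (le_of_lt hy₀.2) hx.1),
        int_ind_full y₀ β x c₂ (le_of_lt hy0pos) (le_of_lt hy₀.2) hx.1, hc₁, hc₂,
        mul_inv_cancel₀ (Complex.ofReal_ne_zero.mpr (ne_of_gt hαy)),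
        mul_inv_cancel₀ (Complex.ofReal_ne_zero.mpr (ne_of_gt hyβ))]
      ring
    have hψ00 : ψ 0 = 0 := by rw [hψ]; simp
    have hIsH1 : IsH1 ψ ψ' := by
      constructor
      · exact (memLp_indicator_const 2 measurableSet_Ioo c₁ (Or.inr (measure_ne_top _ _))).sub
          (memLp_indicator_const 2 measurableSet_Ioo c₂ (Or.inr (measure_ne_top _ _)))
      · intro x hx
        rw [hψ00]
        simp [hψ]
    have hMemV : MemV α β θ ψ ψ' := by
      constructor
      · rw [hψ1 1 ⟨le_of_lt hβ, le_rfl⟩, hψ00, mul_zero]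
      · refine Filter.Eventually.of_forall fun y hy => ?_
        have h1 : y ∉ Ioo α y₀ := by
          rcases hy with hy | hy
          · exact fun h => absurd h.1 (not_lt.mpr (le_of_lt hy.2))
          · exact fun h => absurd h.2 (not_lt.mpr (le_of_lt (lt_trans hy₀.2 hy.1)))
        have h2 : y ∉ Ioo y₀ β := by
          rcases hy with hy | hy
          · exact fun h => absurd h.1 (not_lt.mpr (le_of_lt (lt_trans hy.2 hy₀.1)))
          · exact fun h => absurd h.2 (not_lt.mpr (le_of_lt hy.1))
        show (Ioo α y₀).indicator (fun _ => c₁) y - (Ioo y₀ β).indicator (fun _ => c₂) y = 0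
        rw [indicator_of_notMem h1, indicator_of_notMem h2, sub_zero]
    have hEq := hperp ψ ψ' hIsH1 hMemV
    rw [innerH] at hEq
    have hintψ : (∫ y in Ioo (0:ℝ) α ∪ Ioo β 1, ψ y) = 0 := by
      rw [setIntegral_congr_fun hQ1meas (g := fun _ => (0:ℂ)) ?_, setIntegral_const, smul_zero]
      rintro x (hx | hx)
      · exact hψ0 x ⟨le_of_lt hx.1, le_of_lt hx.2⟩
      · exact hψ1 x ⟨le_of_lt hx.1, le_of_lt hx.2⟩
    have hpt : ∀ y, w' y * conj (ψ' y) =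
        (Ioo α y₀).indicator (fun t => w' t * conj c₁) y
          - (Ioo y₀ β).indicator (fun t => w' t * conj c₂) y := by
      intro y
      rw [hψ']
      by_cases h1 : y ∈ Ioo α y₀ <;> by_cases h2 : y ∈ Ioo y₀ β <;>
        simp [h1, h2, map_sub, mul_sub]
    have hsnd : (∫ y in Ioo (0:ℝ) 1, w' y * conj (ψ' y)) =
        (w y₀ - w α) * conj c₁ - (w β - w y₀) * conj c₂ := by
      simp_rw [hpt]
      rw [integral_sub ((hInt.mul_const _).indicator measurableSet_Ioo)
          ((hInt.mul_const _).indicator measurableSet_Ioo),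
        setint_mul_ind w' (conj c₁) α y₀ (le_of_lt hα) (le_of_lt hy1),
        setint_mul_ind w' (conj c₂) y₀ β (le_of_lt hy0pos) (le_of_lt hβ),
        hwdiff α y₀ (le_of_lt hα) (le_of_lt hy₀.1) hy1,
        hwdiff y₀ β (le_of_lt hy0pos) (le_of_lt hy₀.2) hβ]
    rw [hintψ, hsnd] at hEq
    have hcc₁ : conj c₁ = c₁ := by rw [hc₁, map_inv₀, Complex.conj_ofReal]
    have hcc₂ : conj c₂ = c₂ := by rw [hc₂, map_inv₀, Complex.conj_ofReal]
    rw [hcc₁, hcc₂] at hEq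
    simpa using hEq
  -- the η test function
  have hβα : ((β - α : ℝ) : ℂ) ≠ 0 := Complex.ofReal_ne_zero.mpr (by linarith)
  have hconjE : conj (Complex.exp (2 * Real.pi * Complex.I * θ))
      = Complex.exp (-(2 * Real.pi * Complex.I * θ)) := by
    rw [← Complex.exp_conj]
    congr 1
    simp only [map_mul, map_ofNat, Complex.conj_ofReal, Complex.conj_I]
    ring
  have hEq2 : (∫ y in Ioo (0:ℝ) α ∪ Ioo β 1, w y) *
        ((α : ℂ) + ((1 - β : ℝ) : ℂ) * Complex.exp (-(2 * Real.pi * Complex.I * θ)))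
      + (w β - w α) *
        ((Complex.exp (-(2 * Real.pi * Complex.I * θ)) - 1) * ((β - α : ℝ) : ℂ)⁻¹) = 0 := by
    set E : ℂ := Complex.exp (2 * Real.pi * Complex.I * θ) with hE
    set c : ℂ := (E - 1) * ((β - α : ℝ) : ℂ)⁻¹ with hc
    set φ' : ℝ → ℂ := (Ioo α β).indicator (fun _ => c) with hφ'
    set φ : ℝ → ℂ := fun x => 1 + ∫ t in (0:ℝ)..x, φ' t with hφ
    have hφ0 : ∀ x ∈ Icc (0:ℝ) α, φ x = 1 := by
      intro x hx
      rw [hφ]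
      show 1 + (∫ t in (0:ℝ)..x, (Ioo α β).indicator (fun _ => c) t) = 1
      rw [int_ind_zero _ _ _ _ hx.1 hx.2, add_zero]
    have hφ1 : ∀ x ∈ Icc β 1, φ x = E := by
      intro x hx
      rw [hφ]
      show 1 + (∫ t in (0:ℝ)..x, (Ioo α β).indicator (fun _ => c) t) = E
      rw [int_ind_full α β x c (le_of_lt hα) (le_of_lt hαβ) hx.1, hc, ← mul_assoc,
        mul_comm (((β - α : ℝ) : ℂ)) (E - 1), mul_assoc,
        mul_inv_cancel₀ hβα, mul_one]
      ring
    have hφ00 : φ 0 = 1 := by rw [hφ]; simp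
    have hIsH1 : IsH1 φ φ' := by
      constructor
      · exact memLp_indicator_const 2 measurableSet_Ioo c (Or.inr (measure_ne_top _ _))
      · intro x hx
        rw [hφ00]
    have hMemV : MemV α β θ φ φ' := by
      constructor
      · rw [hφ1 1 ⟨le_of_lt hβ, le_rfl⟩, hφ00, mul_one]
      · refine Filter.Eventually.of_forall fun y hy => ?_
        have h1 : y ∉ Ioo α β := by
          rcases hy with hy | hy
          · exact fun h => absurd h.1 (not_lt.mpr (le_of_lt hy.2))
          · exact fun h => absurd h.2 (not_lt.mpr (le_of_lt hy.1))
        show (Ioo α β).indicator (fun _ => c) y = 0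
        rw [indicator_of_notMem h1]
    have hEq := hperp φ φ' hIsH1 hMemV
    rw [innerH] at hEq
    have hdisj : Disjoint (Ioo (0:ℝ) α) (Ioo β 1) := by
      apply Set.disjoint_left.mpr
      intro t ht ht'
      linarith [ht.2, ht'.1]
    have hintφ : (∫ y in Ioo (0:ℝ) α ∪ Ioo β 1, φ y)
        = (α : ℂ) + ((1 - β : ℝ) : ℂ) * E := by
      rw [setIntegral_union hdisj measurableSet_Ioo
          ((integrableOn_const measure_Ioo_lt_top.ne).congr_fun
            (fun x hx => (hφ0 x ⟨le_of_lt hx.1, le_of_lt hx.2⟩).symm) measurableSet_Ioo)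
          ((integrableOn_const measure_Ioo_lt_top.ne).congr_fun
            (fun x hx => (hφ1 x ⟨le_of_lt hx.1, le_of_lt hx.2⟩).symm) measurableSet_Ioo),
        setIntegral_congr_fun measurableSet_Ioo
          (fun x hx => hφ0 x ⟨le_of_lt hx.1, le_of_lt hx.2⟩),
        setIntegral_congr_fun measurableSet_Ioo
          (fun x hx => hφ1 x ⟨le_of_lt hx.1, le_of_lt hx.2⟩),
        setIntegral_const, setIntegral_const, Real.volume_real_Ioo_of_le hα.le,
        Real.volume_real_Ioo_of_le hβ.le,
        Complex.real_smul, Complex.real_smul, sub_zero, mul_one]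
    have hpt : ∀ y, w' y * conj (φ' y) = (Ioo α β).indicator (fun t => w' t * conj c) y := by
      intro y
      show w' y * conj ((Ioo α β).indicator (fun _ => c) y) = _
      by_cases h : y ∈ Ioo α β <;> simp [h]
    have hsnd : (∫ y in Ioo (0:ℝ) 1, w' y * conj (φ' y)) = (w β - w α) * conj c := by
      simp_rw [hpt]
      rw [setint_mul_ind w' (conj c) α β (le_of_lt hα) (le_of_lt hβ),
        hwdiff α β (le_of_lt hα) (le_of_lt hαβ) hβ]
    rw [hintφ, hsnd] at hEq
    have hconjS : conj ((α : ℂ) + ((1 - β : ℝ) : ℂ) * E)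
        = (α : ℂ) + ((1 - β : ℝ) : ℂ) * Complex.exp (-(2 * Real.pi * Complex.I * θ)) := by
      rw [map_add, map_mul, Complex.conj_ofReal, Complex.conj_ofReal, hE, hconjE]
    have hconjc : conj c
        = (Complex.exp (-(2 * Real.pi * Complex.I * θ)) - 1) * ((β - α : ℝ) : ℂ)⁻¹ := by
      rw [hc, map_mul, map_sub, map_one, map_inv₀, Complex.conj_ofReal, hE, hconjE]
    rw [hconjS, hconjc] at hEq
    exact hEq
  refine ⟨?_, ?_, ?_⟩
  · intro y hy
    have h3 : ((β : ℂ) - α) ≠ 0 := by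
      rw [sub_ne_zero]
      exact_mod_cast ne_of_gt hαβ
    rcases eq_or_lt_of_le hy.1 with hyα | hyα
    · rw [← hyα]; simp
    rcases eq_or_lt_of_le hy.2 with hyβ | hyβ
    · rw [hyβ, mul_assoc, inv_mul_cancel₀ h3, mul_one]; ring
    have keq := key1 y ⟨hyα, hyβ⟩
    have h1 : ((y : ℂ) - α) ≠ 0 := by rw [sub_ne_zero]; exact_mod_cast ne_of_gt hyα
    have h2 : ((β : ℂ) - y) ≠ 0 := by rw [sub_ne_zero]; exact_mod_cast ne_of_gt hyβ
    push_cast at keq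
    field_simp at keq ⊢
    linear_combination keq
  · intro hθ0
    have hθpos : 0 < θ := lt_of_le_of_ne hθ.1 (Ne.symm hθ0)
    have hne : (1 : ℂ) - Complex.exp (-(2 * Real.pi * Complex.I * θ)) ≠ 0 := by
      rw [sub_ne_zero]
      intro h
      obtain ⟨n, hn⟩ := Complex.exp_eq_one_iff.mp h.symm
      have hz : ((θ : ℂ) + n) * (2 * Real.pi * Complex.I) = 0 := by linear_combination -hn
      rcases mul_eq_zero.mp hz with h0 | h0
      · have hth : (θ : ℝ) = -(n : ℝ) := by
          have := add_eq_zero_iff_eq_neg.mp h0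
          exact_mod_cast this
        have hg : (0:ℝ) < -(n:ℝ) := hth ▸ hθpos
        have hi : (0:ℤ) < -n := by exact_mod_cast hg
        have hi' : (1:ℤ) ≤ -n := hi
        have hr : (1:ℝ) ≤ -(n:ℝ) := by exact_mod_cast hi'
        linarith [hθ.2]
      · simp [Real.pi_ne_zero, Complex.I_ne_zero, Complex.ofReal_eq_zero] at h0
    have h3 : ((β : ℂ) - α) ≠ 0 := by
      rw [sub_ne_zero]
      exact_mod_cast ne_of_gt hαβ
    push_cast at hEq2
    field_simp at hEq2 ⊢
    linear_combination -hEq2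
  · intro hθ0
    rw [hθ0] at hEq2
    simp only [Complex.ofReal_zero, mul_zero, neg_zero, Complex.exp_zero, mul_one, sub_self,
      zero_mul, mul_zero, add_zero] at hEq2
    push_cast at hEq2
    have hc0 : ((α : ℂ) + (1 - (β:ℂ))) ≠ 0 := by
      have h : ((α + (1 - β) : ℝ) : ℂ) ≠ 0 := Complex.ofReal_ne_zero.mpr (by linarith)
      push_cast at h
      exact h
    exact (mul_eq_zero.mp hEq2).resolve_right hc0




end
end

section
/- There exists a constant C̃ > 0, depending only on α and β, such that for every θ ∈ [0,1) and every w ∈ V^⊥(θ): |||w|||² ≤ C̃ ∫_{Q₁} |w'(y)|² dy. -/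
open MeasureTheory Real Set
open scoped ComplexConjugate

noncomputable section

/-- `|||u|||² = |∫_{Q₁} u|² + ∫₀¹ |u'|²`. -/
def tripleNormSq (α β : ℝ) (u u' : ℝ → ℂ) : ℝ :=
  ‖∫ y in Ioo (0:ℝ) α ∪ Ioo β 1, u y‖ ^ 2 + ∫ y in Ioo (0:ℝ) 1, ‖u' y‖ ^ 2

/-- Splitting the integral over `(0,1)` into `Q₁ = (0,α)∪(β,1)` and `Q₀ = (α,β)`. -/
lemma integral_Ioo_split {E : Type*} [NormedAddCommGroup E] [NormedSpace ℝ E]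
    {α β : ℝ} (hα : 0 < α) (hαβ : α < β) (hβ : β < 1) (f : ℝ → E)
    (hf : IntegrableOn f (Icc (0:ℝ) 1)) :
    ∫ y in Ioo (0:ℝ) 1, f y =
      (∫ y in Ioo (0:ℝ) α ∪ Ioo β 1, f y) + ∫ y in Ioo α β, f y := by
  have hsub : (Ioo (0:ℝ) α ∪ Ioo β 1) ∪ Ioo α β ⊆ Icc (0:ℝ) 1 := by
    rintro x ((⟨h1, h2⟩ | ⟨h1, h2⟩) | ⟨h1, h2⟩) <;> constructor <;> linarith
  have hae : (Ioo (0:ℝ) 1 : Set ℝ) =ᵐ[volume] (((Ioo (0:ℝ) α ∪ Ioo β 1) ∪ Ioo α β : Set ℝ)) := by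
    refine (MeasureTheory.ae_eq_set).2 ⟨?_, ?_⟩
    · refine measure_mono_null (t := ({α, β} : Set ℝ)) (fun x hx => ?_)
        (Set.Countable.measure_zero (Set.countable_insert.2 (Set.countable_singleton β)) _)
      obtain ⟨⟨h0, h1⟩, hn⟩ := hx
      show x = α ∨ x = β
      simp only [mem_union, mem_Ioo] at hn
      push_neg at hn
      obtain ⟨⟨hn1, hn2⟩, hn3⟩ := hn
      have hxα : α ≤ x := hn1 h0
      rcases eq_or_lt_of_le hxα with h | h
      · exact Or.inl h.symm
      · have hxβ : β ≤ x := hn3 h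
        rcases eq_or_lt_of_le hxβ with h' | h'
        · exact Or.inr h'.symm
        · exact absurd (hn2 h') (by linarith)
    · refine measure_mono_null (fun x hx => ?_) (measure_empty)
      obtain ⟨hx1, hx2⟩ := hx
      rcases hx1 with ((⟨h1, h2⟩ | ⟨h1, h2⟩) | ⟨h1, h2⟩) <;>
        exact hx2 ⟨by linarith, by linarith⟩
  have hdisj : Disjoint (Ioo (0:ℝ) α ∪ Ioo β 1) (Ioo α β) := by
    rw [Set.disjoint_left]
    rintro x (⟨h1, h2⟩ | ⟨h1, h2⟩) ⟨h3, h4⟩ <;> linarith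
  rw [setIntegral_congr_set hae,
    setIntegral_union hdisj measurableSet_Ioo
      (hf.mono_set (fun x hx => hsub (Or.inl hx)))
      (hf.mono_set (fun x hx => hsub (Or.inr hx)))]

set_option maxHeartbeats 2000000 in
theorem stmt_7 (α β : ℝ) (hα : 0 < α) (hαβ : α < β) (hβ : β < 1) :
    ∃ C > (0:ℝ), ∀ θ ∈ Ico (0:ℝ) 1, ∀ w w' : ℝ → ℂ, IsH1 w w' →
      w 1 = Complex.exp (2 * Real.pi * Complex.I * θ) * w 0 →
      (∀ φ φ' : ℝ → ℂ, IsH1 φ φ' → MemV α β θ φ φ' →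
        innerH α β w w' φ φ' = 0) →
      tripleNormSq α β w w' ≤ C * ∫ y in Ioo (0:ℝ) α ∪ Ioo β 1, ‖w' y‖ ^ 2 := by
  have hd0 : (0:ℝ) < β - α := by linarith
  have hd1 : β - α ≤ 1 := by linarith
  have hγ : (0:ℝ) < α + 1 - β := by linarith
  set c1 : ℝ := (2*(β-α)+4)/((β-α)*(α+1-β)^2) with hc1def
  have hc1 : 0 < c1 := by positivity
  refine ⟨(c1+1)^2 + (2*c1+1)^2/(β-α) + 1, by positivity, ?_⟩
  intro θ _ w w' hw hqp horth
  obtain ⟨hw2, hwrep⟩ := hw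
  -- basic abbreviations
  set e : ℂ := Complex.exp (2 * Real.pi * Complex.I * θ) with hedef
  have he : ‖e‖ = 1 := by
    rw [hedef, Complex.norm_exp]; simp
  have hdc : ((β:ℂ) - α) ≠ 0 := by
    have : ((β:ℂ) - α) = ((β - α : ℝ) : ℂ) := by push_cast; ring
    rw [this]
    exact_mod_cast (Complex.ofReal_ne_zero).2 (ne_of_gt hd0)
  -- integrability facts
  have hfin : IsFiniteMeasure (volume.restrict (Ioo (0:ℝ) 1)) := by
    constructor; simp [Real.volume_Ioo]
  have hw'I : IntegrableOn w' (Ioo (0:ℝ) 1) := hw2.integrable one_le_two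
  have hw'Icc : IntegrableOn w' (Icc (0:ℝ) 1) := by
    have h := restrict_Ioo_eq_restrict_Icc (μ := (volume : Measure ℝ)) (a := (0:ℝ)) (b := (1:ℝ))
    rwa [IntegrableOn, ← h]
  have hQ1m : MeasurableSet (Ioo (0:ℝ) α ∪ Ioo β 1) := measurableSet_Ioo.union measurableSet_Ioo
  have hQ1sub : Ioo (0:ℝ) α ∪ Ioo β 1 ⊆ Icc (0:ℝ) 1 := by
    rintro x (⟨h1, h2⟩ | ⟨h1, h2⟩) <;> constructor <;> linarith
  have hQ0sub : Ioo α β ⊆ Icc (0:ℝ) 1 := fun x ⟨h1, h2⟩ => ⟨by linarith, by linarith⟩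
  have hQ0sub' : Ioo α β ⊆ Ioo (0:ℝ) 1 := fun x ⟨h1, h2⟩ => ⟨by linarith, by linarith⟩
  have hnormInt : IntegrableOn (fun y => ‖w' y‖) (Icc (0:ℝ) 1) := hw'Icc.norm
  have hsqInt : IntegrableOn (fun y => ‖w' y‖^2) (Icc (0:ℝ) 1) := by
    have h := restrict_Ioo_eq_restrict_Icc (μ := (volume : Measure ℝ)) (a := (0:ℝ)) (b := (1:ℝ))
    have := hw2.norm.integrable_sq
    rwa [IntegrableOn, ← h]
  -- main quantities
  set K : ℝ := ∫ y in Ioo (0:ℝ) α ∪ Ioo β 1, ‖w' y‖^2 with hKdef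
  set L : ℝ := ∫ y in Ioo (0:ℝ) α ∪ Ioo β 1, ‖w' y‖ with hLdef
  set I₀ : ℂ := ∫ y in Ioo α β, w' y with hI0def
  set I₁ : ℂ := ∫ y in Ioo (0:ℝ) α ∪ Ioo β 1, w' y with hI1def
  set J : ℂ := ∫ y in Ioo (0:ℝ) α ∪ Ioo β 1, w y with hJdef
  set m : ℂ := I₀ / ((β:ℂ) - α) with hmdef
  set A : ℂ := (α:ℂ) + ((1 - β : ℝ):ℂ) * e with hAdef
  have hK0 : 0 ≤ K := by
    rw [hKdef]; exact setIntegral_nonneg hQ1m (fun y _ => sq_nonneg _)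
  have hL0 : 0 ≤ L := by
    rw [hLdef]; exact setIntegral_nonneg hQ1m (fun y _ => norm_nonneg _)
  -- the primitive of w'
  set F : ℝ → ℂ := fun y => ∫ t in Ioc (0:ℝ) y, w' t with hFdef
  have hFcont : ContinuousOn F (Icc (0:ℝ) 1) := intervalIntegral.continuousOn_primitive hw'Icc
  have hFint : IntegrableOn F (Icc (0:ℝ) 1) := hFcont.integrableOn_compact isCompact_Icc
  have hrep' : ∀ y ∈ Icc (0:ℝ) 1, w y = w 0 + F y := fun y hy => by
    rw [hwrep y hy, intervalIntegral.integral_of_le hy.1]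
  have hwIcc : IntegrableOn w (Icc (0:ℝ) 1) := by
    refine IntegrableOn.congr_fun ?_ (fun y hy => (hrep' y hy).symm) measurableSet_Icc
    exact (integrableOn_const (by simp [Real.volume_Icc])).add hFint
  -- quasiperiodicity identities
  have hIoc01 : ∫ y in Ioc (0:ℝ) 1, w' y = I₁ + I₀ := by
    rw [← setIntegral_congr_set (Ioo_ae_eq_Ioc (μ := (volume : Measure ℝ)))]
    exact integral_Ioo_split hα hαβ hβ w' hw'Icc
  have hw1 : w 1 = w 0 + (I₁ + I₀) := by
    have h := hwrep 1 ⟨zero_le_one, le_refl 1⟩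
    rwa [intervalIntegral.integral_of_le zero_le_one, hIoc01] at h
  have heq2 : I₀ + I₁ = (e - 1) * w 0 := by
    rw [hqp] at hw1; linear_combination -hw1
  -- indicator integral helper
  have hind : ∀ (T : Set ℝ) (g : ℝ → ℂ),
      ∫ y in T, (Ioo α β).indicator g y = ∫ y in Ioo α β ∩ T, g y := by
    intro T g
    rw [integral_indicator measurableSet_Ioo, Measure.restrict_restrict measurableSet_Ioo]
  have hcap1 : ∀ y : ℝ, β ≤ y → Ioo α β ∩ Ioc 0 y = Ioo α β := by
    intro y hy
    refine inter_eq_left.2 (fun t ⟨h1, h2⟩ => ⟨by linarith, by linarith⟩)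
  have hcap2 : ∀ y : ℝ, y ≤ α → Ioo α β ∩ Ioc 0 y = ∅ := by
    intro y hy
    refine eq_empty_iff_forall_notMem.2 ?_
    rintro t ⟨⟨h1, h2⟩, ⟨h3, h4⟩⟩; linarith
  have hcap3 : Ioo α β ∩ Ioo (0:ℝ) 1 = Ioo α β := inter_eq_left.2 hQ0sub'
  have hnotmem : ∀ y ∈ Ioo (0:ℝ) α ∪ Ioo β 1, y ∉ Ioo α β := by
    rintro y (⟨h1, h2⟩ | ⟨h1, h2⟩) ⟨h3, h4⟩ <;> linarith
  have hvolQ0 : (volume (Ioo α β)).toReal = β - α := by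
    simp [Real.volume_Ioo, ENNReal.toReal_ofReal hd0.le]
  have hcastd : ((β - α : ℝ) : ℂ) = (β:ℂ) - α := by push_cast; ring
  -- ### Test function 1
  set φ' : ℝ → ℂ := (Ioo α β).indicator (fun y => w' y - m) with hφ'def
  set φ : ℝ → ℂ := fun x => ∫ t in (0:ℝ)..x, φ' t with hφdef
  have hφ'mem : MemLp φ' 2 (volume.restrict (Ioo (0:ℝ) 1)) := by
    exact MemLp.indicator measurableSet_Ioo (hw2.sub (memLp_const m))
  have hw'Q0 : IntegrableOn w' (Ioo α β) := hw'Icc.mono_set hQ0sub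
  have hm0 : ∫ y in Ioo α β, (w' y - m) = 0 := by
    rw [integral_sub hw'Q0 (integrableOn_const (by simp [Real.volume_Ioo])),
      setIntegral_const, measureReal_def, hvolQ0, Complex.real_smul, hmdef, hcastd]
    field_simp
    rw [hI0def, sub_self]
  have hφ0 : φ 0 = 0 := by simp [hφdef]
  have hφIoc : ∀ y ∈ Ioc (0:ℝ) 1, φ y = ∫ t in Ioo α β ∩ Ioc 0 y, (w' t - m) := by
    intro y hy
    rw [hφdef]
    simp only
    rw [intervalIntegral.integral_of_le hy.1.le, hφ'def, hind]
  have hφ1 : φ 1 = 0 := by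
    rw [hφIoc 1 ⟨one_pos, le_refl 1⟩, hcap1 1 hβ.le, hm0]
  have hφQ1 : EqOn φ (fun _ => (0:ℂ)) (Ioo (0:ℝ) α ∪ Ioo β 1) := by
    rintro y (⟨h1, h2⟩ | ⟨h1, h2⟩)
    · rw [hφIoc y ⟨h1, by linarith⟩, hcap2 y h2.le]; simp
    · rw [hφIoc y ⟨by linarith, h2.le⟩, hcap1 y h1.le, hm0]
  have hIsφ : IsH1 φ φ' := by
    refine ⟨hφ'mem, fun x _ => ?_⟩
    rw [hφ0, zero_add]
  have hMemφ : MemV α β θ φ φ' := by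
    refine ⟨by rw [hφ1, hφ0, mul_zero], Filter.Eventually.of_forall (fun y hy => ?_)⟩
    rw [hφ'def]
    exact indicator_of_notMem (hnotmem y hy) _
  have horth1 := horth φ φ' hIsφ hMemφ
  unfold innerH at horth1
  have hQ1φ : ∫ y in Ioo (0:ℝ) α ∪ Ioo β 1, φ y = 0 := by
    rw [setIntegral_congr_fun hQ1m hφQ1]; simp
  have hptw : (fun y => w' y * conj (φ' y)) =
      (Ioo α β).indicator (fun y => w' y * conj (w' y - m)) := by
    funext y
    by_cases h : y ∈ Ioo α β
    · rw [hφ'def]; simp [indicator_of_mem h]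
    · rw [hφ'def]; simp [indicator_of_notMem h]
  have hsqQ0c : IntegrableOn (fun y => ((‖w' y‖^2 : ℝ) : ℂ)) (Ioo α β) :=
    (hsqInt.mono_set hQ0sub).ofReal
  have h2nd : ∫ y in Ioo α β, w' y * conj (w' y - m) = 0 := by
    rw [hQ1φ] at horth1
    simp only [map_zero, mul_zero, zero_add] at horth1
    rwa [hptw, hind, hcap3] at horth1
  have hsplit2 : ∫ y in Ioo α β, w' y * conj (w' y - m)
      = ((∫ y in Ioo α β, ‖w' y‖^2 : ℝ) : ℂ) - I₀ * conj m := by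
    have hpt : ∀ y, w' y * conj (w' y - m) = ((‖w' y‖^2 : ℝ) : ℂ) - w' y * conj m := by
      intro y
      rw [map_sub, mul_sub, Complex.mul_conj, Complex.normSq_eq_norm_sq]
    rw [setIntegral_congr_fun measurableSet_Ioo (fun y _ => hpt y),
      integral_sub hsqQ0c (hw'Q0.mul_const (conj m)), integral_mul_const]
    congr 1
    exact integral_ofReal
  have hFactA : ∫ y in Ioo α β, ‖w' y‖^2 = ‖I₀‖^2/(β - α) := by
    have h := hsplit2.symm.trans h2nd
    have h' : ((∫ y in Ioo α β, ‖w' y‖^2 : ℝ) : ℂ) = I₀ * conj m := by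
      linear_combination h
    rw [hmdef, map_div₀, map_sub, Complex.conj_ofReal, Complex.conj_ofReal] at h'
    have h'' : ((∫ y in Ioo α β, ‖w' y‖^2 : ℝ) : ℂ) = ((‖I₀‖^2/(β-α) : ℝ) : ℂ) := by
      rw [h', ← mul_div_assoc, Complex.mul_conj, Complex.normSq_eq_norm_sq]
      push_cast; ring
    exact_mod_cast h''
  -- ### Test function 2: η
  set η' : ℝ → ℂ := (Ioo α β).indicator (fun _ => (e - 1) / ((β:ℂ) - α)) with hη'def
  set η : ℝ → ℂ := fun x => 1 + ∫ t in (0:ℝ)..x, η' t with hηdef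
  have hη'mem : MemLp η' 2 (volume.restrict (Ioo (0:ℝ) 1)) :=
    MemLp.indicator measurableSet_Ioo (memLp_const _)
  have hconstint : ∫ _ in Ioo α β, ((e - 1) / ((β:ℂ) - α)) = e - 1 := by
    rw [setIntegral_const, measureReal_def, hvolQ0, Complex.real_smul, hcastd]
    field_simp
  have hη0 : η 0 = 1 := by simp [hηdef]
  have hηIoc : ∀ y ∈ Ioc (0:ℝ) 1, η y = 1 + ∫ _ in Ioo α β ∩ Ioc 0 y, ((e - 1) / ((β:ℂ) - α)) := by
    intro y hy
    rw [hηdef]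
    simp only
    rw [intervalIntegral.integral_of_le hy.1.le, hη'def, hind]
  have hη1 : η 1 = e := by
    rw [hηIoc 1 ⟨one_pos, le_refl 1⟩, hcap1 1 hβ.le, hconstint]; ring
  have hIsη : IsH1 η η' := by
    refine ⟨hη'mem, fun x _ => ?_⟩
    rw [hη0]
  have hMemη : MemV α β θ η η' := by
    refine ⟨by rw [hη1, hη0, mul_one], Filter.Eventually.of_forall (fun y hy => ?_)⟩
    rw [hη'def]
    exact indicator_of_notMem (hnotmem y hy) _
  have horth2 := horth η η' hIsη hMemη
  unfold innerH at horth2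
  have hηa : EqOn η (fun _ => (1:ℂ)) (Ioo (0:ℝ) α) := by
    intro y ⟨h1, h2⟩
    rw [hηIoc y ⟨h1, by linarith⟩, hcap2 y h2.le]
    simp
  have hηb : EqOn η (fun _ => e) (Ioo β 1) := by
    intro y ⟨h1, h2⟩
    rw [hηIoc y ⟨by linarith, h2.le⟩, hcap1 y h1.le, hconstint]
    ring
  have hdisjab : Disjoint (Ioo (0:ℝ) α) (Ioo β 1) := by
    rw [Set.disjoint_left]; rintro x ⟨h1, h2⟩ ⟨h3, h4⟩; linarith
  have hηQ1 : ∫ y in Ioo (0:ℝ) α ∪ Ioo β 1, η y = A := by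
    rw [setIntegral_union hdisjab measurableSet_Ioo
      (IntegrableOn.congr_fun (integrableOn_const (by simp [Real.volume_Ioo])) hηa.symm measurableSet_Ioo)
      (IntegrableOn.congr_fun (integrableOn_const (by simp [Real.volume_Ioo])) hηb.symm measurableSet_Ioo),
      setIntegral_congr_fun measurableSet_Ioo hηa, setIntegral_congr_fun measurableSet_Ioo hηb,
      setIntegral_const, setIntegral_const]
    rw [measureReal_def, measureReal_def, Real.volume_Ioo, Real.volume_Ioo, sub_zero, ENNReal.toReal_ofReal hα.le,
      ENNReal.toReal_ofReal (by linarith : (0:ℝ) ≤ 1 - β), hAdef,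
      Complex.real_smul, Complex.real_smul]
    push_cast
    ring
  have hptw2 : (fun y => w' y * conj (η' y)) =
      (Ioo α β).indicator (fun y => w' y * conj ((e - 1) / ((β:ℂ) - α))) := by
    funext y
    by_cases h : y ∈ Ioo α β
    · rw [hη'def]; simp [indicator_of_mem h]
    · rw [hη'def]; simp [indicator_of_notMem h]
  have hFactB : J * conj A + I₀ * conj ((e - 1) / ((β:ℂ) - α)) = 0 := by
    rw [hηQ1] at horth2
    rwa [hptw2, hind, hcap3, integral_mul_const] at horth2
  -- ### Decomposition of J
  set R : ℂ := J - A * w 0 with hRdef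
  have hJR : J = A * w 0 + R := by rw [hRdef]; ring
  set Lα : ℝ := ∫ y in Ioo (0:ℝ) α, ‖w' y‖ with hLadef
  set Lβ : ℝ := ∫ y in Ioo β 1, ‖w' y‖ with hLbdef
  have hsubα : Ioo (0:ℝ) α ⊆ Icc (0:ℝ) 1 := fun x hx => hQ1sub (Or.inl hx)
  have hsubβ : Ioo β 1 ⊆ Icc (0:ℝ) 1 := fun x hx => hQ1sub (Or.inr hx)
  have hLa0 : 0 ≤ Lα := setIntegral_nonneg measurableSet_Ioo (fun y _ => norm_nonneg _)
  have hLb0 : 0 ≤ Lβ := setIntegral_nonneg measurableSet_Ioo (fun y _ => norm_nonneg _)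
  have hLsplit : L = Lα + Lβ := by
    rw [hLdef, setIntegral_union hdisjab measurableSet_Ioo
      (hnormInt.mono_set hsubα) (hnormInt.mono_set hsubβ)]
  have hLI1 : ‖I₁‖ ≤ L := by
    rw [hI1def, hLdef]
    exact norm_integral_le_integral_norm _
  have hJsplit : J = (∫ y in Ioo (0:ℝ) α, w y) + ∫ y in Ioo β 1, w y := by
    rw [hJdef]
    exact setIntegral_union hdisjab measurableSet_Ioo
      (hwIcc.mono_set hsubα) (hwIcc.mono_set hsubβ)
  have hFbound : ∀ y ∈ Ioo (0:ℝ) α, ‖F y‖ ≤ Lα := by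
    intro y ⟨h1, h2⟩
    refine le_trans (norm_integral_le_integral_norm _) ?_
    refine setIntegral_mono_set (hnormInt.mono_set hsubα)
      (Filter.Eventually.of_forall (fun t => norm_nonneg _)) ?_
    exact HasSubset.Subset.eventuallyLE (fun t ⟨ht1, ht2⟩ => ⟨ht1, by linarith⟩)
  have hint_a : ∫ y in Ioo (0:ℝ) α, w y = α • w 0 + ∫ y in Ioo (0:ℝ) α, F y := by
    rw [setIntegral_congr_fun measurableSet_Ioo (fun y hy => hrep' y (hsubα hy)),
      integral_add (μ := volume.restrict (Ioo (0:ℝ) α)) (integrableOn_const (by simp [Real.volume_Ioo]) : IntegrableOn (fun _ => w 0) (Ioo (0:ℝ) α) volume)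
        (hFint.mono_set hsubα), setIntegral_const, measureReal_def, Real.volume_Ioo, sub_zero,
      ENNReal.toReal_ofReal hα.le]
  have hRa : ‖∫ y in Ioo (0:ℝ) α, F y‖ ≤ Lα * α := by
    have h := norm_setIntegral_le_of_norm_le_const (C := Lα)
      (by simp [Real.volume_Ioo] : volume (Ioo (0:ℝ) α) < ⊤) hFbound
    rwa [measureReal_def, Real.volume_Ioo, sub_zero, ENNReal.toReal_ofReal hα.le] at h
  -- right piece
  set G : ℝ → ℂ := fun y => ∫ t in Ioc y 1, w' t with hGdef
  have hFG : ∀ y ∈ Icc (0:ℝ) 1, F 1 = F y + G y := by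
    intro y hy
    rw [hFdef, hGdef]
    simp only
    rw [← Set.Ioc_union_Ioc_eq_Ioc hy.1 hy.2]
    exact setIntegral_union (Set.Ioc_disjoint_Ioc_of_le le_rfl) measurableSet_Ioc
      (hw'Icc.mono_set (fun t ⟨ht1, ht2⟩ => ⟨ht1.le, le_trans ht2 hy.2⟩))
      (hw'Icc.mono_set (fun t ⟨ht1, ht2⟩ => ⟨le_trans hy.1 ht1.le, ht2⟩))
  have hwb : ∀ y ∈ Ioo β 1, w y = w 1 - G y := by
    intro y hy
    have h1 := hrep' y (hsubβ hy)
    have h2 := hrep' 1 ⟨zero_le_one, le_refl 1⟩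
    have h3 := hFG y (hsubβ hy)
    rw [h1, h2]
    linear_combination -h3
  have hGb : ∀ y ∈ Ioo β 1, ‖G y‖ ≤ Lβ := by
    intro y ⟨h1, h2⟩
    refine le_trans (norm_integral_le_integral_norm _) (le_of_le_of_eq ?_
      (setIntegral_congr_set (Ioo_ae_eq_Ioc (μ := (volume : Measure ℝ))).symm))
    refine setIntegral_mono_set (hnormInt.mono_set (fun t ⟨ht1, ht2⟩ => ⟨by linarith, ht2⟩))
      (Filter.Eventually.of_forall (fun t => norm_nonneg _)) ?_
    exact HasSubset.Subset.eventuallyLE (fun t ⟨ht1, ht2⟩ => ⟨by linarith, ht2⟩)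
  have hGint : IntegrableOn G (Ioo β 1) := by
    refine IntegrableOn.congr_fun (Integrable.sub
      (integrableOn_const (by simp [Real.volume_Ioo]) :
        IntegrableOn (fun _ : ℝ => F 1) (Ioo β 1) volume)
      (hFint.mono_set hsubβ)) (fun y hy => ?_) measurableSet_Ioo
    have := hFG y (hsubβ hy)
    simp only [Pi.sub_apply]
    linear_combination this
  have hint_b : ∫ y in Ioo β 1, w y = (1 - β) • w 1 - ∫ y in Ioo β 1, G y := by
    rw [setIntegral_congr_fun measurableSet_Ioo hwb,
      integral_sub (μ := volume.restrict (Ioo β 1)) (integrableOn_const (by simp [Real.volume_Ioo]) : IntegrableOn (fun _ => w 1) (Ioo β 1) volume) hGint,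
      setIntegral_const, measureReal_def, Real.volume_Ioo, ENNReal.toReal_ofReal (by linarith : (0:ℝ) ≤ 1 - β)]
  have hRb : ‖∫ y in Ioo β 1, G y‖ ≤ Lβ * (1 - β) := by
    have h := norm_setIntegral_le_of_norm_le_const (C := Lβ)
      (by simp [Real.volume_Ioo] : volume (Ioo β 1) < ⊤) hGb
    rwa [measureReal_def, Real.volume_Ioo, ENNReal.toReal_ofReal (by linarith : (0:ℝ) ≤ 1 - β)] at h
  have hRsum : R = (∫ y in Ioo (0:ℝ) α, F y) - ∫ y in Ioo β 1, G y := by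
    rw [hRdef, hJsplit, hint_a, hint_b, hqp, hAdef, Complex.real_smul, Complex.real_smul]
    push_cast
    ring
  have hRbound : ‖R‖ ≤ L := by
    rw [hRsum]
    refine le_trans (norm_sub_le _ _) ?_
    have h1 := hRa
    have h2 := hRb
    rw [hLsplit]
    have q1 : Lα*α ≤ Lα*1 := mul_le_mul_of_nonneg_left (by linarith : α ≤ 1) hLa0
    have q2 : Lβ*(1-β) ≤ Lβ*1 := mul_le_mul_of_nonneg_left (by linarith : 1-β ≤ 1) hLb0
    linarith only [h1, h2, q1, q2]
  -- ### The algebraic identity and the resulting bounds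
  have hconjdiv : conj ((e - 1) / ((β:ℂ) - α)) = conj (e - 1) / ((β:ℂ) - α) := by
    rw [map_div₀]
    congr 1
    rw [map_sub, Complex.conj_ofReal, Complex.conj_ofReal]
  have hFactB' : J * conj A * ((β:ℂ) - α) + I₀ * conj (e - 1) = 0 := by
    have h := hFactB
    rw [hconjdiv] at h
    have h2 := congrArg (fun z => z * ((β:ℂ) - α)) h
    simp only [zero_mul] at h2
    rw [add_mul, mul_assoc I₀, div_mul_cancel₀ _ hdc] at h2
    exact h2
  have hkey : w 0 * (A * conj A * ((β:ℂ) - α) + (e - 1) * conj (e - 1))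
      = -(R * conj A * ((β:ℂ) - α)) + I₁ * conj (e - 1) := by
    linear_combination hFactB' - (conj A * ((β:ℂ) - α)) * hJR - conj (e - 1) * heq2
  have hE : A * conj A * ((β:ℂ) - α) + (e - 1) * conj (e - 1)
      = ((‖A‖^2*(β-α) + ‖e-1‖^2 : ℝ) : ℂ) := by
    rw [Complex.mul_conj, Complex.mul_conj]
    simp only [Complex.normSq_eq_norm_sq]
    push_cast
    ring
  have hEnn : (0:ℝ) ≤ ‖A‖^2*(β-α) + ‖e-1‖^2 := by positivity
  rw [hE] at hkey
  have hnormeq : ‖w 0‖ * (‖A‖^2*(β-α) + ‖e-1‖^2)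
      = ‖-(R * conj A * ((β:ℂ) - α)) + I₁ * conj (e - 1)‖ := by
    rw [← congrArg norm hkey, norm_mul, Complex.norm_real, Real.norm_eq_abs,
      abs_of_nonneg hEnn]
  have hAle : ‖A‖ ≤ 1 := by
    rw [hAdef]
    refine le_trans (norm_add_le _ _) ?_
    rw [norm_mul, he, Complex.norm_real, Complex.norm_real, Real.norm_eq_abs, Real.norm_eq_abs,
      abs_of_nonneg hα.le, abs_of_nonneg (by linarith : (0:ℝ) ≤ 1 - β)]
    linarith
  have hble : ‖e - 1‖ ≤ 2 := by
    refine le_trans (norm_sub_le _ _) ?_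
    rw [he, norm_one]
    norm_num
  have hγle : α + 1 - β ≤ ‖A‖ + ‖e - 1‖ := by
    have hid : ((α + 1 - β : ℝ) : ℂ) = A - ((1 - β : ℝ) : ℂ) * (e - 1) := by
      rw [hAdef]; push_cast; ring
    have h1 : α + 1 - β = ‖((α + 1 - β : ℝ) : ℂ)‖ := by
      rw [Complex.norm_real, Real.norm_eq_abs, abs_of_pos hγ]
    rw [h1, hid]
    refine le_trans (norm_sub_le _ _) ?_
    rw [norm_mul, Complex.norm_real, Real.norm_eq_abs,
      abs_of_nonneg (by linarith : (0:ℝ) ≤ 1 - β)]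
    have q1 : (1-β)*‖e-1‖ ≤ ‖e-1‖ :=
      mul_le_of_le_one_left (norm_nonneg (e-1)) (by linarith : 1-β ≤ 1)
    linarith only [q1]
  have hβαnorm : ‖(β:ℂ) - α‖ = β - α := by
    rw [← hcastd, Complex.norm_real, Real.norm_eq_abs, abs_of_pos hd0]
  have hRHS : ‖-(R * conj A * ((β:ℂ) - α)) + I₁ * conj (e - 1)‖ ≤ L*(β-α) + 2*L := by
    refine le_trans (norm_add_le _ _) ?_
    rw [norm_neg, norm_mul, norm_mul, norm_mul, RCLike.norm_conj, RCLike.norm_conj, hβαnorm]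
    have q1 : ‖R‖*‖A‖*(β-α) ≤ L*1*(β-α) :=
      mul_le_mul_of_nonneg_right (mul_le_mul hRbound hAle (norm_nonneg A) hL0) hd0.le
    have q2 : ‖I₁‖*‖e-1‖ ≤ L*2 := mul_le_mul hLI1 hble (norm_nonneg _) hL0
    linarith only [q1, q2]
  have hElb : (β-α)*((α+1-β)^2/2) ≤ ‖A‖^2*(β-α) + ‖e-1‖^2 := by
    have t1 := mul_le_mul_of_nonneg_left (mul_self_le_mul_self hγ.le hγle) hd0.le
    have t2 := mul_nonneg hd0.le (sq_nonneg (‖A‖ - ‖e-1‖))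
    have t3 := mul_nonneg (by linarith : (0:ℝ) ≤ 1 - (β-α)) (sq_nonneg ‖e-1‖)
    nlinarith only [t1, t2, t3]
  have hw0b : ‖w 0‖ ≤ c1 * L := by
    have h1 : ‖w 0‖ * ((β-α)*((α+1-β)^2/2)) ≤ L*(β-α) + 2*L := by
      calc ‖w 0‖ * ((β-α)*((α+1-β)^2/2))
          ≤ ‖w 0‖ * (‖A‖^2*(β-α) + ‖e-1‖^2) :=
            mul_le_mul_of_nonneg_left hElb (norm_nonneg _)
        _ = ‖-(R * conj A * ((β:ℂ) - α)) + I₁ * conj (e - 1)‖ := hnormeq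
        _ ≤ L*(β-α) + 2*L := hRHS
    have hpos : (0:ℝ) < (β-α)*((α+1-β)^2/2) := by positivity
    have h2 : ‖w 0‖ ≤ (L*(β-α) + 2*L)/((β-α)*((α+1-β)^2/2)) := (le_div_iff₀ hpos).2 h1
    have h3 : (L*(β-α) + 2*L)/((β-α)*((α+1-β)^2/2)) = c1 * L := by
      rw [hc1def]; field_simp; ring
    rwa [h3] at h2
  have hI0b : ‖I₀‖ ≤ (2*c1+1)*L := by
    have hId : I₀ = (e-1)*(w 0) - I₁ := by linear_combination heq2
    rw [hId]
    refine le_trans (norm_sub_le _ _) ?_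
    rw [norm_mul]
    have q1 : ‖e-1‖*‖w 0‖ ≤ 2*(c1*L) :=
      mul_le_mul hble hw0b (norm_nonneg (w 0)) (by norm_num : (0:ℝ) ≤ 2)
    linarith only [q1, hLI1]
  have hJb : ‖J‖ ≤ (c1+1)*L := by
    rw [hJR]
    refine le_trans (norm_add_le _ _) ?_
    rw [norm_mul]
    have q1 : ‖A‖*‖w 0‖ ≤ 1*(c1*L) :=
      mul_le_mul hAle hw0b (norm_nonneg (w 0)) zero_le_one
    linarith only [q1, hRbound]
  -- ### Cauchy–Schwarz: L² ≤ K
  have hQ1sub2 : Ioo (0:ℝ) α ∪ Ioo β 1 ⊆ Ioo (0:ℝ) 1 := by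
    rintro x (⟨h1, h2⟩ | ⟨h1, h2⟩) <;> exact ⟨by linarith, by linarith⟩
  have hμle : volume (Ioo (0:ℝ) α ∪ Ioo β 1) ≤ volume (Ioo (0:ℝ) 1) := measure_mono hQ1sub2
  have hfinQ1 : IsFiniteMeasure (volume.restrict (Ioo (0:ℝ) α ∪ Ioo β 1)) := by
    constructor
    rw [Measure.restrict_apply_univ]
    exact lt_of_le_of_lt hμle (by simp [Real.volume_Ioo])
  have hT1 : (volume (Ioo (0:ℝ) α ∪ Ioo β 1)).toReal ≤ 1 := by
    have := ENNReal.toReal_mono (by simp [Real.volume_Ioo] : volume (Ioo (0:ℝ) 1) ≠ ⊤) hμle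
    simpa [Real.volume_Ioo] using this
  have hT0 : (0:ℝ) ≤ (volume (Ioo (0:ℝ) α ∪ Ioo β 1)).toReal := ENNReal.toReal_nonneg
  have hL2K : L^2 ≤ K := by
    have h2e : ENNReal.ofReal (2:ℝ) = 2 := by norm_num
    have hwQ1 : MemLp (fun y => ‖w' y‖) 2 (volume.restrict (Ioo (0:ℝ) α ∪ Ioo β 1)) :=
      (hw2.norm).mono_measure (Measure.restrict_mono hQ1sub2 le_rfl)
    have hh := integral_mul_le_Lp_mul_Lq_of_nonneg
      (μ := volume.restrict (Ioo (0:ℝ) α ∪ Ioo β 1))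
      Real.HolderConjugate.two_two
      (Filter.Eventually.of_forall (fun y => norm_nonneg (w' y)))
      (Filter.Eventually.of_forall (fun _ => zero_le_one))
      (h2e ▸ hwQ1) (h2e ▸ memLp_const (1:ℝ))
    simp only [mul_one, Real.one_rpow, Real.rpow_two] at hh
    simp only [integral_const, smul_eq_mul, one_pow, mul_one, measureReal_def, Measure.restrict_apply_univ] at hh
    set T : ℝ := (volume (Ioo (0:ℝ) α ∪ Ioo β 1)).toReal with hTdef
    have hL' : L ≤ K ^ ((1:ℝ)/2) * T ^ ((1:ℝ)/2) := hh
    have hKs : (K ^ ((1:ℝ)/2))^2 = K := by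
      rw [← Real.rpow_natCast (K ^ ((1:ℝ)/2)) 2, ← Real.rpow_mul hK0]
      norm_num
    have hTs : (T ^ ((1:ℝ)/2))^2 = T := by
      rw [← Real.rpow_natCast (T ^ ((1:ℝ)/2)) 2, ← Real.rpow_mul hT0]
      norm_num
    have h1 : L^2 ≤ (K ^ ((1:ℝ)/2) * T ^ ((1:ℝ)/2))^2 := pow_le_pow_left₀ hL0 hL' 2
    rw [mul_pow, hKs, hTs] at h1
    have q1 : K*T ≤ K*1 := mul_le_mul_of_nonneg_left hT1 hK0
    linarith only [h1, q1]
  -- ### Conclusion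
  unfold tripleNormSq
  rw [← hJdef]
  have hKsplit : ∫ y in Ioo (0:ℝ) 1, ‖w' y‖^2 = K + ‖I₀‖^2/(β-α) := by
    rw [integral_Ioo_split hα hαβ hβ _ hsqInt, hFactA, hKdef]
  rw [hKsplit]
  have h1 : ‖J‖^2 ≤ (c1+1)^2*K := by
    have f1 := mul_self_le_mul_self (norm_nonneg J) hJb
    have f2 := mul_le_mul_of_nonneg_left hL2K (by positivity : (0:ℝ) ≤ (c1+1)^2)
    nlinarith only [f1, f2]
  have h2 : ‖I₀‖^2 ≤ (2*c1+1)^2*K := by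
    have f1 := mul_self_le_mul_self (norm_nonneg I₀) hI0b
    have f2 := mul_le_mul_of_nonneg_left hL2K (by positivity : (0:ℝ) ≤ (2*c1+1)^2)
    nlinarith only [f1, f2]
  have h3 : ‖I₀‖^2/(β-α) ≤ (2*c1+1)^2*K/(β-α) := (div_le_div_iff_of_pos_right hd0).2 h2
  have h4 : ((c1+1)^2 + (2*c1+1)^2/(β-α) + 1)*K
      = (c1+1)^2*K + (2*c1+1)^2*K/(β-α) + K := by
    field_simp
  linarith only [h1, h2, h3, h4]

end
end

section
/- Let w ∈ H¹(0,1) satisfy w(1) = w(0), suppose w is affine on [α,β], and suppose ∫_{Q₁} w(y) dy = 0. Then |||w|||² ≤ (1 + 2|Q₁|/(β − α)) ∫_{Q₁} |w'(y)|² dy. -/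
open MeasureTheory Real Set
open scoped ComplexConjugate

noncomputable section

theorem stmt_8 (α β : ℝ) (hα : 0 < α) (hαβ : α < β) (hβ : β < 1)
    (w w' : ℝ → ℂ) (hw : IsH1 w w')
    (hper : w 1 = w 0)
    (haff : ∀ y ∈ Icc α β,
      w y = (w β - w α) * ((β : ℂ) - α)⁻¹ * ((y : ℂ) - α) + w α)
    (hmean : (∫ y in Ioo (0:ℝ) α ∪ Ioo β 1, w y) = 0) :
    tripleNormSq α β w w' ≤
      (1 + 2 * (1 - β + α) / (β - α)) *
        ∫ y in Ioo (0:ℝ) α ∪ Ioo β 1, ‖w' y‖ ^ 2 := by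
  obtain ⟨hw2, hFTC⟩ := hw
  set c : ℂ := (w β - w α) * ((β : ℂ) - α)⁻¹ with hc
  have haffc : ∀ x ∈ Icc α β, w x - w α = c * ((x : ℂ) - (α : ℂ)) := by
    intro x hx
    rw [haff x hx, hc]; ring
  -- basic integrability
  haveI : IsFiniteMeasure (volume.restrict (Ioo (0:ℝ) 1)) := by
    constructor
    simp [Real.volume_Ioo]
  have hInt : IntegrableOn w' (Ioo (0:ℝ) 1) volume :=
    hw2.integrable (by norm_num)
  have hInt2 : IntegrableOn (fun y => ‖w' y‖ ^ 2) (Ioo (0:ℝ) 1) volume := by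
    have := hw2.integrable_norm_rpow (by norm_num) (by norm_num)
    refine this.congr (Filter.Eventually.of_forall fun y => ?_)
    norm_num [Real.rpow_natCast]
  have hii : ∀ a b : ℝ, 0 ≤ min a b → max a b ≤ 1 → IntervalIntegrable w' volume a b := by
    intro a b ha hb
    rw [intervalIntegrable_iff]
    exact (integrableOn_Ioc_iff_integrableOn_Ioo).mpr
      (hInt.mono_set (Ioo_subset_Ioo ha hb))
  -- fundamental theorem of calculus between points of [0,1]
  have hW : ∀ a b : ℝ, 0 ≤ a → b ≤ 1 → a ≤ b → (∫ t in a..b, w' t) = w b - w a := by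
    intro a b ha hb hab
    have h1 : (∫ t in (0:ℝ)..a, w' t) + (∫ t in a..b, w' t) = ∫ t in (0:ℝ)..b, w' t := by
      apply intervalIntegral.integral_add_adjacent_intervals
      · exact hii 0 a (by simp only [le_min_iff]; exact ⟨by linarith, by linarith⟩)
          (by simp only [max_le_iff]; exact ⟨by linarith, by linarith⟩)
      · exact hii a b (by simp only [le_min_iff]; exact ⟨by linarith, by linarith⟩)
          (by simp only [max_le_iff]; exact ⟨by linarith, by linarith⟩)
    have ha' : a ∈ Icc (0:ℝ) 1 := ⟨ha, by linarith⟩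
    have hb' : b ∈ Icc (0:ℝ) 1 := ⟨by linarith, hb⟩
    rw [hFTC a ha', hFTC b hb']
    linear_combination h1
  -- w' = c a.e. on (α,β), via Lebesgue differentiation
  have hae : ∀ᵐ x ∂(volume.restrict (Ioo α β)), w' x = c := by
    set g : ℝ → ℂ := (Ioo (0:ℝ) 1).indicator w' with hg
    have hgint : Integrable g volume := (integrable_indicator_iff measurableSet_Ioo).mpr hInt
    have H := IsUnifLocDoublingMeasure.ae_tendsto_average (μ := (volume : Measure ℝ))
      hgint.locallyIntegrable 1
    rw [ae_restrict_iff' measurableSet_Ioo]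
    filter_upwards [H] with x hx hxm
    have hx1 : x ∈ Ioo (0:ℝ) 1 := ⟨by linarith [hxm.1], by linarith [hxm.2]⟩
    have hT : Filter.Tendsto (fun j : ℝ => ⨍ y in Metric.closedBall x j, g y)
        (nhdsWithin 0 (Ioi 0)) (nhds (g x)) := by
      refine hx (fun _ => x) id Filter.tendsto_id ?_
      filter_upwards [self_mem_nhdsWithin] with j (hj : (0:ℝ) < j)
      exact Metric.mem_closedBall_self (by simpa using hj.le)
    have hEv : ∀ᶠ j in nhdsWithin (0:ℝ) (Ioi 0),
        (⨍ y in Metric.closedBall x j, g y) = c := by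
      have hmem : Ioo (0:ℝ) (min (x - α) (β - x)) ∈ nhdsWithin (0:ℝ) (Ioi 0) := by
        refine Ioo_mem_nhdsGT_of_mem ⟨le_refl 0, ?_⟩
        rw [lt_min_iff]
        exact ⟨by linarith [hxm.1], by linarith [hxm.2]⟩
      filter_upwards [hmem] with j hj
      have hj0 : 0 < j := hj.1
      have hj1 : j < x - α := lt_of_lt_of_le hj.2 (min_le_left _ _)
      have hj2 : j < β - x := lt_of_lt_of_le hj.2 (min_le_right _ _)
      have hIcc : Metric.closedBall x j = Icc (x - j) (x + j) := Real.closedBall_eq_Icc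
      have hint1 : (∫ y in Ioc (x - j) (x + j), g y) = ∫ y in Ioc (x - j) (x + j), w' y := by
        refine setIntegral_congr_fun measurableSet_Ioc fun y hy => ?_
        have hy1 : y ∈ Ioo (0:ℝ) 1 := ⟨by linarith [hy.1], by linarith [hy.2]⟩
        exact indicator_of_mem hy1 w'
      have hint2 : (∫ y in Ioc (x - j) (x + j), w' y) = c * (2 * j) := by
        rw [← intervalIntegral.integral_of_le (by linarith)]
        rw [hW (x - j) (x + j) (by linarith) (by linarith) (by linarith)]
        have h1 := haffc (x + j) ⟨by linarith, by linarith⟩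
        have h2 := haffc (x - j) ⟨by linarith, by linarith⟩
        have : w (x + j) - w (x - j) = (w (x+j) - w α) - (w (x-j) - w α) := by ring
        rw [this, h1, h2]
        push_cast
        ring
      rw [setAverage_eq, hIcc, integral_Icc_eq_integral_Ioc, hint1, hint2,
        measureReal_def, Real.volume_Icc]
      have h2j : (x + j - (x - j)) = 2 * j := by ring
      rw [h2j, ENNReal.toReal_ofReal (by linarith)]
      rw [Complex.real_smul]
      push_cast
      have h2jne : (2 * (j:ℂ)) ≠ 0 := by
        simp only [ne_eq, mul_eq_zero]
        push_neg
        exact ⟨two_ne_zero, by exact_mod_cast hj0.ne'⟩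
      field_simp
      exact mul_div_cancel_left₀ c (Complex.ofReal_ne_zero.mpr hj0.ne')
    have hT2 : Filter.Tendsto (fun j : ℝ => ⨍ y in Metric.closedBall x j, g y)
        (nhdsWithin (0:ℝ) (Ioi 0)) (nhds c) :=
      Filter.Tendsto.congr' (hEv.mono fun j h => h.symm) tendsto_const_nhds
    have hcgx : g x = c := tendsto_nhds_unique hT hT2
    exact (indicator_of_mem hx1 w').symm.trans hcgx
  -- set decomposition
  have hQsub : Ioo (0:ℝ) α ∪ Ioo β 1 ⊆ Ioo (0:ℝ) 1 := by
    rintro y (hy | hy) <;> exact ⟨by linarith [hy.1, hy.2], by linarith [hy.1, hy.2]⟩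
  have hMsub : Ioo α β ⊆ Ioo (0:ℝ) 1 := fun y hy => ⟨by linarith [hy.1], by linarith [hy.2]⟩
  have hdisj1 : Disjoint (Ioo (0:ℝ) α) (Ioo β 1) := by
    rw [Set.disjoint_left]; rintro y ⟨_, h1⟩ ⟨h2, _⟩; linarith
  have hdisj : Disjoint (Ioo (0:ℝ) α ∪ Ioo β 1) (Ioo α β) := by
    rw [Set.disjoint_left]
    rintro y (⟨_, h1⟩ | ⟨h1, _⟩) ⟨h2, h3⟩ <;> linarith
  have hQmeas : MeasurableSet (Ioo (0:ℝ) α ∪ Ioo β 1) :=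
    measurableSet_Ioo.union measurableSet_Ioo
  have hsplitset : (Ioo (0:ℝ) 1 : Set ℝ) =ᵐ[volume]
      (((Ioo 0 α ∪ Ioo β 1) ∪ Ioo α β : Set ℝ)) := by
    rw [MeasureTheory.ae_eq_set]
    constructor
    · have hcnt : (volume : Measure ℝ) ({α, β} : Set ℝ) = 0 :=
        Set.Countable.measure_zero (Set.countable_insert.2 (Set.countable_singleton β)) _
      refine measure_mono_null (fun y hy => ?_) hcnt
      obtain ⟨⟨hy1, hy2⟩, hy3⟩ := hy
      by_contra hne
      simp only [mem_insert_iff, mem_singleton_iff, not_or] at hne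
      apply hy3
      rcases lt_trichotomy y α with h | h | h
      · exact Or.inl (Or.inl ⟨hy1, h⟩)
      · exact absurd h hne.1
      · rcases lt_trichotomy y β with h2 | h2 | h2
        · exact Or.inr ⟨h, h2⟩
        · exact absurd h2 hne.2
        · exact Or.inl (Or.inr ⟨h2, hy2⟩)
    · refine measure_mono_null (t := (∅ : Set ℝ)) (fun y hy => ?_) measure_empty
      exact absurd (Or.elim hy.1 (fun h => hQsub h) (fun h => hMsub h)) hy.2
  have hsplit : (∫ y in Ioo (0:ℝ) 1, ‖w' y‖ ^ 2) =
      (∫ y in Ioo (0:ℝ) α ∪ Ioo β 1, ‖w' y‖ ^ 2) + ∫ y in Ioo α β, ‖w' y‖ ^ 2 := by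
    rw [setIntegral_congr_set hsplitset]
    exact setIntegral_union hdisj measurableSet_Ioo (hInt2.mono_set hQsub)
      (hInt2.mono_set hMsub)
  -- value of ∫_{Q₁} w'
  have e1 : (∫ y in Ioo (0:ℝ) α, w' y) = w α - w 0 := by
    rw [← integral_Ioc_eq_integral_Ioo, ← intervalIntegral.integral_of_le hα.le]
    exact hW 0 α le_rfl (by linarith) hα.le
  have e2 : (∫ y in Ioo β 1, w' y) = w 1 - w β := by
    rw [← integral_Ioc_eq_integral_Ioo, ← intervalIntegral.integral_of_le (by linarith)]
    exact hW β 1 (by linarith) le_rfl (by linarith)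
  have hQ1w' : (∫ y in Ioo (0:ℝ) α ∪ Ioo β 1, w' y) = -(c * ((β:ℂ) - (α:ℂ))) := by
    rw [setIntegral_union hdisj1 measurableSet_Ioo
      (hInt.mono_set fun y hy => hQsub (Or.inl hy))
      (hInt.mono_set fun y hy => hQsub (Or.inr hy)), e1, e2, hper]
    have hβc := haffc β ⟨hαβ.le, le_refl β⟩
    linear_combination -hβc
  -- measure of Q₁
  have hvol : (volume (Ioo (0:ℝ) α ∪ Ioo β 1)).toReal = 1 - β + α := by
    rw [measure_union hdisj1 measurableSet_Ioo, Real.volume_Ioo, Real.volume_Ioo,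
      ← ENNReal.ofReal_add (by linarith) (by linarith),
      ENNReal.toReal_ofReal (by linarith)]
    ring
  -- ∫_{(α,β)} |w'|² = |c|² (β - α)
  have hB : (∫ y in Ioo α β, ‖w' y‖ ^ 2) = ‖c‖ ^ 2 * (β - α) := by
    have : (∫ y in Ioo α β, ‖w' y‖ ^ 2) = ∫ _y in Ioo α β, ‖c‖ ^ 2 := by
      refine integral_congr_ae (hae.mono fun x h => ?_)
      simp only [h]
    rw [this, setIntegral_const, measureReal_def, Real.volume_Ioo, ENNReal.toReal_ofReal (by linarith),
      smul_eq_mul, mul_comm]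
  -- Cauchy–Schwarz on Q₁
  set A : ℝ := ∫ y in Ioo (0:ℝ) α ∪ Ioo β 1, ‖w' y‖ ^ 2 with hA
  have hA0 : 0 ≤ A := setIntegral_nonneg hQmeas fun y _ => by positivity
  haveI : IsFiniteMeasure (volume.restrict (Ioo (0:ℝ) α ∪ Ioo β 1)) := by
    constructor
    rw [Measure.restrict_apply_univ]
    exact lt_of_le_of_lt (measure_mono hQsub) (by simp [Real.volume_Ioo])
  have hCS : ‖∫ y in Ioo (0:ℝ) α ∪ Ioo β 1, w' y‖ ^ 2 ≤ (1 - β + α) * A := by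
    have hmemQ : MemLp w' 2 (volume.restrict (Ioo (0:ℝ) α ∪ Ioo β 1)) :=
      hw2.mono_measure (Measure.restrict_mono hQsub le_rfl)
    have hconj : Real.HolderConjugate 2 2 := Real.HolderConjugate.two_two
    have hHold := integral_mul_le_Lp_mul_Lq_of_nonneg
      (μ := volume.restrict (Ioo (0:ℝ) α ∪ Ioo β 1)) hconj
      (f := fun y => ‖w' y‖) (g := fun _ => (1:ℝ))
      (Filter.Eventually.of_forall fun y => norm_nonneg _)
      (Filter.Eventually.of_forall fun y => zero_le_one)
      (by simpa using hmemQ.norm) (by simpa using memLp_const (1:ℝ))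
    simp only [mul_one, one_pow] at hHold
    have hint_one : (∫ _a : ℝ in Ioo (0:ℝ) α ∪ Ioo β 1, (1:ℝ) ^ (2:ℝ)) = 1 - β + α := by
      simp [hvol, measureReal_def]
    have hintsq : (∫ a in Ioo (0:ℝ) α ∪ Ioo β 1, ‖w' a‖ ^ (2:ℝ)) = A := by
      rw [hA]
      refine integral_congr_ae (Filter.Eventually.of_forall fun y => ?_)
      show ‖w' y‖ ^ (2:ℝ) = ‖w' y‖ ^ (2:ℕ)
      rw [← Real.rpow_natCast ‖w' y‖ 2]
      norm_num
    have h1 : ‖∫ y in Ioo (0:ℝ) α ∪ Ioo β 1, w' y‖ ≤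
        ∫ y in Ioo (0:ℝ) α ∪ Ioo β 1, ‖w' y‖ :=
      norm_integral_le_integral_norm _
    have h2 : (∫ y in Ioo (0:ℝ) α ∪ Ioo β 1, ‖w' y‖) ≤
        A ^ ((1:ℝ)/2) * (1 - β + α) ^ ((1:ℝ)/2) := by
      calc (∫ y in Ioo (0:ℝ) α ∪ Ioo β 1, ‖w' y‖) ≤ _ := hHold
        _ = A ^ ((1:ℝ)/2) * (1 - β + α) ^ ((1:ℝ)/2) := by
            rw [hintsq, hint_one]
    have hL0 : (0:ℝ) ≤ 1 - β + α := by linarith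
    have hsq : (A ^ ((1:ℝ)/2) * (1 - β + α) ^ ((1:ℝ)/2)) ^ 2 = A * (1 - β + α) := by
      rw [mul_pow, ← Real.rpow_natCast (A ^ ((1:ℝ)/2)) 2,
        ← Real.rpow_natCast ((1 - β + α) ^ ((1:ℝ)/2)) 2,
        ← Real.rpow_mul hA0, ← Real.rpow_mul hL0]
      norm_num
    calc ‖∫ y in Ioo (0:ℝ) α ∪ Ioo β 1, w' y‖ ^ 2
        ≤ (A ^ ((1:ℝ)/2) * (1 - β + α) ^ ((1:ℝ)/2)) ^ 2 := by
          apply pow_le_pow_left₀ (norm_nonneg _) (le_trans h1 h2)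
      _ = A * (1 - β + α) := hsq
      _ = (1 - β + α) * A := by ring
  -- put everything together
  have hnorm : ‖∫ y in Ioo (0:ℝ) α ∪ Ioo β 1, w' y‖ ^ 2 = ‖c‖ ^ 2 * (β - α) ^ 2 := by
    rw [hQ1w', norm_neg, norm_mul]
    have : ‖(β:ℂ) - (α:ℂ)‖ = β - α := by
      rw [← Complex.ofReal_sub, Complex.norm_real, Real.norm_of_nonneg (by linarith)]
    rw [this]
    ring
  have hd : (0:ℝ) < β - α := by linarith
  have hkey : ‖c‖ ^ 2 * (β - α) ^ 2 ≤ (1 - β + α) * A := by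
    rw [← hnorm]; exact hCS
  have hBle : (∫ y in Ioo α β, ‖w' y‖ ^ 2) * (β - α) ≤ (1 - β + α) * A := by
    rw [hB]
    calc ‖c‖ ^ 2 * (β - α) * (β - α) = ‖c‖ ^ 2 * (β - α) ^ 2 := by ring
      _ ≤ (1 - β + α) * A := hkey
  rw [tripleNormSq, hmean, hsplit]
  simp only [norm_zero]
  have hLA : 0 ≤ (1 - β + α) * A := mul_nonneg (by linarith) hA0
  have hfin : A + (∫ y in Ioo α β, ‖w' y‖ ^ 2) ≤ (1 + 2 * (1 - β + α) / (β - α)) * A := by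
    rw [add_mul, one_mul]
    have h3 : (∫ y in Ioo α β, ‖w' y‖ ^ 2) ≤ 2 * (1 - β + α) / (β - α) * A := by
      rw [div_mul_eq_mul_div, le_div_iff₀ hd]
      nlinarith [hBle, hLA]
    linarith
  calc (0:ℝ) ^ 2 + (A + ∫ y in Ioo α β, ‖w' y‖ ^ 2)
      = A + ∫ y in Ioo α β, ‖w' y‖ ^ 2 := by ring
    _ ≤ (1 + 2 * (1 - β + α) / (β - α)) * A := hfin

end
end

section
/- Let θ ∈ (0,1) and let w ∈ H¹(0,1) satisfy w(1) = e^{2πiθ}w(0) and w(β) − w(α) = d_θ ∫_{Q₁} w(y) dy. Then |1 − (1 − β + α e^{−2πiθ}) d_θ (1 − e^{−2πiθ})^{-1}|² · |∫_{Q₁} w(y) dy|² ≤ 2 ( 4 + |1 − β + α e^{−2πiθ}|² |1 − e^{−2πiθ}|^{-2} ) ∫_{Q₁} |w'(y)|² dy. -/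
open MeasureTheory Real Set
open scoped ComplexConjugate

noncomputable section

/-- `d_θ = (β − α)(1 − e^{−2πiθ})⁻¹(α + (1 − β)e^{−2πiθ})`. -/
def dTheta (α β θ : ℝ) : ℂ :=
  ((β : ℂ) - α) * (1 - Complex.exp (-(2 * Real.pi * Complex.I * θ)))⁻¹ *
    ((α : ℂ) + (1 - β) * Complex.exp (-(2 * Real.pi * Complex.I * θ)))

lemma arith_aux (a N T : ℝ) (ha : 0 ≤ a) (hN : 0 ≤ N) (hT : 0 ≤ T) (h : N ^ 2 ≤ T) :
    (a * N + N) ^ 2 ≤ 2 * (4 + a ^ 2) * T := by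
  nlinarith [mul_nonneg (sq_nonneg a) (sub_nonneg.2 h),
    mul_nonneg (mul_nonneg ha (by norm_num : (0:ℝ) ≤ 2)) (sub_nonneg.2 h),
    mul_nonneg hT (sq_nonneg (a - 1))]

theorem stmt_10 (α β : ℝ) (hα : 0 < α) (hαβ : α < β) (hβ : β < 1)
    (θ : ℝ) (hθ : θ ∈ Ioo (0:ℝ) 1)
    (w w' : ℝ → ℂ) (hw : IsH1 w w')
    (hwq : w 1 = Complex.exp (2 * Real.pi * Complex.I * θ) * w 0)
    (hwd : w β - w α = dTheta α β θ * ∫ y in Ioo (0:ℝ) α ∪ Ioo β 1, w y) :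
    ‖(1 : ℂ) - ((1 : ℂ) - β + α * Complex.exp (-(2 * Real.pi * Complex.I * θ))) *
          dTheta α β θ * (1 - Complex.exp (-(2 * Real.pi * Complex.I * θ)))⁻¹‖ ^ 2 *
        ‖∫ y in Ioo (0:ℝ) α ∪ Ioo β 1, w y‖ ^ 2 ≤
      2 * (4 + ‖(1 : ℂ) - β + α * Complex.exp (-(2 * Real.pi * Complex.I * θ))‖ ^ 2 *
            (‖(1 : ℂ) - Complex.exp (-(2 * Real.pi * Complex.I * θ))‖ ^ 2)⁻¹) *
        ∫ y in Ioo (0:ℝ) α ∪ Ioo β 1, ‖w' y‖ ^ 2 := by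
  obtain ⟨hθ0, hθ1⟩ := hθ
  set q : ℂ := Complex.exp (-(2 * Real.pi * Complex.I * θ)) with hq_def
  set E : ℂ := Complex.exp (2 * Real.pi * Complex.I * θ) with hE_def
  set c : ℂ := (1 : ℂ) - β + α * q with hc_def
  set e : ℂ := 1 - q with he_def
  set d : ℂ := dTheta α β θ with hd_def
  -- basic complex facts
  have hqE : q * E = 1 := by
    rw [hq_def, hE_def, ← Complex.exp_add]; ring_nf; exact Complex.exp_zero
  have hEne : E ≠ 0 := Complex.exp_ne_zero _
  have hq1 : q ≠ 1 := by
    intro h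
    rw [hq_def, Complex.exp_eq_one_iff] at h
    obtain ⟨n, hn⟩ := h
    have hπI : (2 * (Real.pi:ℂ) * Complex.I) ≠ 0 :=
      mul_ne_zero (mul_ne_zero two_ne_zero (by exact_mod_cast Real.pi_ne_zero)) Complex.I_ne_zero
    have hn' : (2 * (Real.pi:ℂ) * Complex.I) * (θ:ℂ) = (2 * (Real.pi:ℂ) * Complex.I) * ((-n:ℤ):ℂ) := by
      push_cast
      linear_combination -hn
    have hn'' : (θ:ℂ) = ((-n:ℤ):ℂ) := mul_left_cancel₀ hπI hn'
    have hθn : θ = ((-n:ℤ):ℝ) := by exact_mod_cast hn''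
    have h1 : (0:ℤ) < -n := by exact_mod_cast hθn ▸ hθ0
    have h2 : (-n:ℤ) < 1 := by exact_mod_cast hθn ▸ hθ1
    omega
  have hene : e ≠ 0 := sub_ne_zero.mpr (Ne.symm hq1)
  have hE1 : E - 1 = E * e := by rw [he_def]; linear_combination hqE
  have hce : ((α:ℂ) + (1 - β) * E) * e = c * (E - 1) := by
    rw [hc_def, he_def]; linear_combination (-((α:ℂ) + 1 - β)) * hqE
  -- integrability of w'
  haveI hfin : IsFiniteMeasure (volume.restrict (Ioo (0:ℝ) 1)) := by
    constructor
    simp [Real.volume_Ioo]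
  have hw'int : IntegrableOn w' (Ioo (0:ℝ) 1) := hw.1.integrable (by norm_num)
  have hii : ∀ a b : ℝ, 0 ≤ a → a ≤ b → b ≤ 1 → IntervalIntegrable w' volume a b := by
    intro a b ha hab hb1
    rw [intervalIntegrable_iff_integrableOn_Ioo_of_le hab]
    exact hw'int.mono_set (Ioo_subset_Ioo ha hb1)
  have hrep := hw.2
  have hαmem : α ∈ Icc (0:ℝ) 1 := ⟨hα.le, le_trans hαβ.le hβ.le⟩
  have hβmem : β ∈ Icc (0:ℝ) 1 := ⟨(hα.trans hαβ).le, hβ.le⟩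
  set S₁ := ∫ t in (0:ℝ)..α, w' t with hS₁_def
  set S₂ := ∫ t in β..(1:ℝ), w' t with hS₂_def
  set Iw := ∫ y in Ioo (0:ℝ) α ∪ Ioo β 1, w y with hIw_def
  have h4 : (E - 1) * w 0 = (S₁ + S₂) + d * Iw := by
    have h01 : w 1 = w 0 + ∫ t in (0:ℝ)..1, w' t := hrep 1 (by norm_num)
    have hadd1 : S₁ + (∫ t in α..β, w' t) = ∫ t in (0:ℝ)..β, w' t :=
      intervalIntegral.integral_add_adjacent_intervals
        (hii 0 α le_rfl hα.le hαmem.2) (hii α β hα.le hαβ.le hβ.le)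
    have hadd2 : (∫ t in (0:ℝ)..β, w' t) + S₂ = ∫ t in (0:ℝ)..1, w' t :=
      intervalIntegral.integral_add_adjacent_intervals
        (hii 0 β le_rfl hβmem.1 hβ.le) (hii β 1 hβmem.1 hβ.le le_rfl)
    have hab : (∫ t in α..β, w' t) = w β - w α := by
      rw [hrep α hαmem, hrep β hβmem, ← hadd1]; ring
    rw [hwd] at hab
    rw [hwq] at h01
    linear_combination h01 - hadd2 - hadd1 + hab
  -- continuity / integrability of w on [0,1]
  have hw'Icc : IntegrableOn w' (uIcc (0:ℝ) 1) := by
    rw [uIcc_of_le (by norm_num : (0:ℝ) ≤ 1)]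
    rw [integrableOn_Icc_iff_integrableOn_Ioo]
    exact hw'int
  have hgc : ContinuousOn (fun x => w 0 + ∫ t in (0:ℝ)..x, w' t) (Icc (0:ℝ) 1) := by
    have := (continuousOn_const (c := w 0)).add (intervalIntegral.continuousOn_primitive_interval hw'Icc)
    rwa [uIcc_of_le (by norm_num : (0:ℝ) ≤ 1)] at this
  have hgint : IntegrableOn (fun x => w 0 + ∫ t in (0:ℝ)..x, w' t) (Icc (0:ℝ) 1) :=
    hgc.integrableOn_Icc
  have hwIcc : IntegrableOn w (Icc (0:ℝ) 1) :=
    hgint.congr_fun (fun x hx => (hrep x hx).symm) measurableSet_Icc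
  have hwint1 : IntegrableOn w (Ioo (0:ℝ) α) :=
    hwIcc.mono_set (Ioo_subset_Icc_self.trans (Icc_subset_Icc le_rfl hαmem.2))
  have hwint2 : IntegrableOn w (Ioo β 1) :=
    hwIcc.mono_set (Ioo_subset_Icc_self.trans (Icc_subset_Icc hβmem.1 le_rfl))
  have hdisj : Disjoint (Ioo (0:ℝ) α) (Ioo β 1) :=
    ((Set.Iic_disjoint_Ioi hαβ.le).mono (Ioo_subset_Iio_self.trans Iio_subset_Iic_self) Ioo_subset_Ioi_self)
  have hIsplit : Iw = (∫ y in (0:ℝ)..α, w y) + ∫ y in β..(1:ℝ), w y := by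
    rw [hIw_def, setIntegral_union hdisj measurableSet_Ioo hwint1 hwint2,
      intervalIntegral.integral_of_le hα.le, intervalIntegral.integral_of_le hβ.le,
      integral_Ioc_eq_integral_Ioo, integral_Ioc_eq_integral_Ioo]
  have hwiv1 : IntervalIntegrable w volume 0 α := by
    rw [intervalIntegrable_iff_integrableOn_Ioo_of_le hα.le]
    exact hwint1
  have hwiv2 : IntervalIntegrable w volume β 1 := by
    rw [intervalIntegrable_iff_integrableOn_Ioo_of_le hβ.le]
    exact hwint2
  set R₁ := ∫ y in (0:ℝ)..α, (w y - w 0) with hR₁_def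
  set R₂ := ∫ y in β..(1:ℝ), (w y - w 1) with hR₂_def
  have e1 : ∫ y in (0:ℝ)..α, w y = R₁ + (α:ℂ) * w 0 := by
    rw [hR₁_def, intervalIntegral.integral_sub hwiv1 intervalIntegrable_const,
      intervalIntegral.integral_const]
    simp [Complex.real_smul]
  have e2 : ∫ y in β..(1:ℝ), w y = R₂ + ((1:ℂ) - β) * (E * w 0) := by
    rw [hR₂_def, intervalIntegral.integral_sub hwiv2 intervalIntegrable_const,
      intervalIntegral.integral_const, hwq]
    simp [Complex.real_smul]
  have h7 : Iw = ((α:ℂ) + (1 - β) * E) * w 0 + (R₁ + R₂) := by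
    rw [hIsplit, e1, e2]; ring
  have hee : e * e⁻¹ = 1 := mul_inv_cancel₀ hene
  have key : (1 - c * d * e⁻¹) * Iw = c * e⁻¹ * (S₁ + S₂) + (R₁ + R₂) := by
    linear_combination h7 + c * e⁻¹ * h4 + e⁻¹ * (w 0) * hce - ((α:ℂ) + (1 - β) * E) * (w 0) * hee
  -- norm bounds
  set N₁ := ∫ y in (0:ℝ)..α, ‖w' y‖ with hN₁_def
  set N₂ := ∫ y in β..(1:ℝ), ‖w' y‖ with hN₂_def
  have hnn : ∀ᵐ t ∂(volume.restrict (Set.Ioc (0:ℝ) 1)), 0 ≤ ‖w' t‖ :=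
    Filter.Eventually.of_forall fun t => norm_nonneg _
  have hS₁ : ‖S₁‖ ≤ N₁ := intervalIntegral.norm_integral_le_integral_norm hα.le
  have hS₂ : ‖S₂‖ ≤ N₂ := intervalIntegral.norm_integral_le_integral_norm hβ.le
  have hN₁0 : 0 ≤ N₁ :=
    intervalIntegral.integral_nonneg hα.le fun t _ => norm_nonneg _
  have hN₂0 : 0 ≤ N₂ :=
    intervalIntegral.integral_nonneg hβ.le fun t _ => norm_nonneg _
  have hR₁ : ‖R₁‖ ≤ α * N₁ := by
    have hb : ∀ x ∈ Set.uIoc (0:ℝ) α, ‖w x - w 0‖ ≤ N₁ := by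
      intro x hx
      rw [Set.uIoc_of_le hα.le] at hx
      have hx1 : x ∈ Icc (0:ℝ) 1 := ⟨hx.1.le, hx.2.trans hαmem.2⟩
      have : w x - w 0 = ∫ t in (0:ℝ)..x, w' t := by rw [hrep x hx1]; ring
      rw [this]
      calc ‖∫ t in (0:ℝ)..x, w' t‖ ≤ ∫ t in (0:ℝ)..x, ‖w' t‖ :=
            intervalIntegral.norm_integral_le_integral_norm hx.1.le
        _ ≤ N₁ := intervalIntegral.integral_mono_interval le_rfl hx.1.le hx.2
            (Filter.Eventually.of_forall fun t => norm_nonneg _)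
            ((hii 0 α le_rfl hα.le hαmem.2).norm)
    have := intervalIntegral.norm_integral_le_of_norm_le_const hb
    rw [sub_zero, abs_of_nonneg hα.le] at this
    rw [hR₁_def]
    linarith [this]
  have hR₂ : ‖R₂‖ ≤ (1 - β) * N₂ := by
    have hb : ∀ x ∈ Set.uIoc β (1:ℝ), ‖w x - w 1‖ ≤ N₂ := by
      intro x hx
      rw [Set.uIoc_of_le hβ.le] at hx
      have hx1 : x ∈ Icc (0:ℝ) 1 := ⟨hβmem.1.trans hx.1.le, hx.2⟩
      have hadd : (∫ t in (0:ℝ)..x, w' t) + ∫ t in x..(1:ℝ), w' t = ∫ t in (0:ℝ)..1, w' t :=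
        intervalIntegral.integral_add_adjacent_intervals
          (hii 0 x le_rfl hx1.1 hx1.2) (hii x 1 hx1.1 hx1.2 le_rfl)
      have : w x - w 1 = -∫ t in x..(1:ℝ), w' t := by
        rw [hrep x hx1, hrep 1 (by norm_num)]
        linear_combination hadd
      rw [this, norm_neg]
      calc ‖∫ t in x..(1:ℝ), w' t‖ ≤ ∫ t in x..(1:ℝ), ‖w' t‖ :=
            intervalIntegral.norm_integral_le_integral_norm hx1.2
        _ ≤ N₂ := intervalIntegral.integral_mono_interval hx.1.le hx1.2 le_rfl
            (Filter.Eventually.of_forall fun t => norm_nonneg _)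
            ((hii β 1 hβmem.1 hβ.le le_rfl).norm)
    have := intervalIntegral.norm_integral_le_of_norm_le_const hb
    rw [abs_of_nonneg (by linarith : (0:ℝ) ≤ 1 - β)] at this
    rw [hR₂_def]
    linarith [this]
  -- Cauchy-Schwarz on the union
  set T := ∫ y in Ioo (0:ℝ) α ∪ Ioo β 1, ‖w' y‖ ^ 2 with hT_def
  have hT0 : 0 ≤ T :=
    setIntegral_nonneg (measurableSet_Ioo.union measurableSet_Ioo) fun y _ => sq_nonneg _
  have hsub : Ioo (0:ℝ) α ∪ Ioo β 1 ⊆ Ioo (0:ℝ) 1 :=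
    Set.union_subset (Ioo_subset_Ioo le_rfl hαmem.2) (Ioo_subset_Ioo hβmem.1 le_rfl)
  have hNsum : N₁ + N₂ = ∫ y in Ioo (0:ℝ) α ∪ Ioo β 1, ‖w' y‖ := by
    rw [setIntegral_union hdisj measurableSet_Ioo
      (MeasureTheory.IntegrableOn.mono_set hw'int.norm (Ioo_subset_Ioo le_rfl hαmem.2))
      (MeasureTheory.IntegrableOn.mono_set hw'int.norm (Ioo_subset_Ioo hβmem.1 le_rfl)),
      hN₁_def, hN₂_def, intervalIntegral.integral_of_le hα.le,
      intervalIntegral.integral_of_le hβ.le,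
      integral_Ioc_eq_integral_Ioo, integral_Ioc_eq_integral_Ioo]
  have hNT : (N₁ + N₂) ^ 2 ≤ T := by
    haveI : IsFiniteMeasure (volume.restrict (Ioo (0:ℝ) α ∪ Ioo β 1)) := by
      constructor
      rw [Measure.restrict_apply_univ]
      exact lt_of_le_of_lt (measure_mono hsub) (by simp [Real.volume_Ioo])
    have hmem2 : MemLp (fun y => ‖w' y‖) (ENNReal.ofReal 2)
        (volume.restrict (Ioo (0:ℝ) α ∪ Ioo β 1)) := by
      have := (hw.1.norm).mono_measure (Measure.restrict_mono hsub le_rfl)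
      convert this using 2
      norm_num
    have hconj : Real.HolderConjugate 2 2 := ⟨by norm_num, by norm_num, by norm_num⟩
    have hH := integral_mul_le_Lp_mul_Lq_of_nonneg (μ := volume.restrict (Ioo (0:ℝ) α ∪ Ioo β 1))
      hconj (f := fun y => ‖w' y‖) (g := fun _ => (1:ℝ))
      (Filter.Eventually.of_forall fun t => norm_nonneg _)
      (Filter.Eventually.of_forall fun t => zero_le_one)
      hmem2 (by rw [show ENNReal.ofReal 2 = 2 by norm_num]; exact memLp_const 1)
    simp only [mul_one] at hH
    have hm : (volume (Ioo (0:ℝ) α ∪ Ioo β 1)).toReal = α + (1 - β) := by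
      rw [measure_union hdisj measurableSet_Ioo]
      simp [Real.volume_Ioo, ENNReal.toReal_add, ENNReal.ofReal_ne_top,
        ENNReal.toReal_ofReal hα.le, ENNReal.toReal_ofReal (by linarith : (0:ℝ) ≤ 1 - β)]
    have hint1 : ∫ y in Ioo (0:ℝ) α ∪ Ioo β 1, (1:ℝ) ^ (2:ℝ) = α + (1 - β) := by
      simp [Measure.real, hm]
    have hint2 : (∫ y in Ioo (0:ℝ) α ∪ Ioo β 1, ‖w' y‖ ^ (2:ℝ)) = T := by
      rw [hT_def]
      congr 1
      ext y
      rw [Real.rpow_two]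
    rw [hint1, hint2, ← hNsum] at hH
    have hm1 : α + (1 - β) ≤ 1 := by linarith
    have hm0 : (0:ℝ) ≤ α + (1 - β) := by linarith
    calc (N₁ + N₂) ^ 2 ≤ (T ^ (1/(2:ℝ)) * (α + (1-β)) ^ (1/(2:ℝ))) ^ 2 := by
          apply pow_le_pow_left₀ (by linarith) hH
      _ = T * (α + (1 - β)) := by
          rw [← Real.sqrt_eq_rpow, ← Real.sqrt_eq_rpow, mul_pow,
            Real.sq_sqrt hT0, Real.sq_sqrt hm0]
      _ ≤ T * 1 := by nlinarith
      _ = T := mul_one T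
  -- final assembly
  have hN0 : (0:ℝ) ≤ N₁ + N₂ := by linarith
  set a := ‖c‖ * ‖e‖⁻¹ with ha_def
  have ha0 : 0 ≤ a := mul_nonneg (norm_nonneg _) (inv_nonneg.mpr (norm_nonneg _))
  clear_value q E c e d S₁ S₂ Iw R₁ R₂ N₁ N₂ T a
  have hbound : ‖c * e⁻¹ * (S₁ + S₂) + (R₁ + R₂)‖ ≤ a * (N₁ + N₂) + (N₁ + N₂) := by
    have t1 : ‖c * e⁻¹ * (S₁ + S₂)‖ ≤ a * (N₁ + N₂) := by
      rw [ha_def, norm_mul, norm_mul, norm_inv]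
      exact mul_le_mul_of_nonneg_left ((norm_add_le _ _).trans (by linarith))
        (mul_nonneg (norm_nonneg _) (inv_nonneg.mpr (norm_nonneg _)))
    have t2 : ‖R₁ + R₂‖ ≤ N₁ + N₂ := by
      have := norm_add_le R₁ R₂
      nlinarith [hR₁, hR₂, hN₁0, hN₂0, hα.le, hβ.le]
    calc ‖c * e⁻¹ * (S₁ + S₂) + (R₁ + R₂)‖
        ≤ ‖c * e⁻¹ * (S₁ + S₂)‖ + ‖R₁ + R₂‖ := norm_add_le _ _
      _ ≤ a * (N₁ + N₂) + (N₁ + N₂) := add_le_add t1 t2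
  have hLHS : ‖(1:ℂ) - c * d * e⁻¹‖ ^ 2 * ‖Iw‖ ^ 2
      = ‖c * e⁻¹ * (S₁ + S₂) + (R₁ + R₂)‖ ^ 2 := by
    rw [← mul_pow, ← norm_mul, key]
  have hfinal : ‖c * e⁻¹ * (S₁ + S₂) + (R₁ + R₂)‖ ^ 2
      ≤ 2 * (4 + ‖c‖ ^ 2 * (‖e‖ ^ 2)⁻¹) * T := by
    have h1 : ‖c * e⁻¹ * (S₁ + S₂) + (R₁ + R₂)‖ ^ 2 ≤ (a * (N₁ + N₂) + (N₁ + N₂)) ^ 2 :=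
      pow_le_pow_left₀ (norm_nonneg _) hbound 2
    have h2 : ‖c‖ ^ 2 * (‖e‖ ^ 2)⁻¹ = a ^ 2 := by rw [ha_def, mul_pow, inv_pow]
    rw [h2]
    exact h1.trans (arith_aux a (N₁ + N₂) T ha0 hN0 hT0 hNT)
  rw [hLHS]
  exact hfinal

end
end

section
/- Let N ≥ 1 and 0 ≤ j ≤ N − 1 be integers and set θ = j/N. Let p : ℝ → ℝ be 1-periodic and measurable with 0 < p_min ≤ p ≤ p_max almost everywhere, let λ ∈ ℝ, and let v be locally H¹ on ℝ with v(y + 1) = e^{2πiθ}v(y) for all y, satisfying ∫₀¹ χ₀ p v' conj(Φ') = λ ∫₀¹ v conj(Φ) for every locally H¹ function Φ with Φ(y + 1) = e^{2πiθ}Φ(y) for all y and Φ' = 0 almost everywhere on F₁. Then for every locally H¹ N-periodic function φ with φ' = 0 almost everywhere on F₁, one has ∫₀ᴺ χ₀ p v' conj(φ') = λ ∫₀ᴺ v conj(φ). (Thus every θ-quasiperiodic Bloch eigenfunction with θ = j/N is an eigenfunction of the N-periodic operator A_N with the same eigenvalue.) -/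
open MeasureTheory Real Set
open scoped ComplexConjugate

noncomputable section

/-- `u` is locally `H¹` on `ℝ` with (weak) derivative `u'`: `u'` is locally
square-integrable and `u x = u 0 + ∫₀ˣ u'` for all `x`. -/
def IsH1Loc (u u' : ℝ → ℂ) : Prop :=
  AEStronglyMeasurable u' volume ∧
  (∀ a b : ℝ, IntervalIntegrable (fun t => ‖u' t‖ ^ 2) volume a b) ∧
  ∀ x : ℝ, u x = u 0 + ∫ t in (0:ℝ)..x, u' t

/-- The periodic "soft" component `F₀ = ∪ₙ (n+α, n+β)`. -/
def F0 (α β : ℝ) : Set ℝ := ⋃ n : ℤ, Ioo ((n : ℝ) + α) ((n : ℝ) + β)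

/-- The periodic "stiff" component `F₁ = ∪ₙ ((n, n+α) ∪ (n+β, n+1))`. -/
def F1 (α β : ℝ) : Set ℝ :=
  ⋃ n : ℤ, (Ioo (n : ℝ) ((n : ℝ) + α) ∪ Ioo ((n : ℝ) + β) ((n : ℝ) + 1))


namespace StmtAux

/-- An `L²loc` function is `L¹loc`. -/
lemma intInt_of_sq {u' : ℝ → ℂ} (hm : AEStronglyMeasurable u' volume)
    (h2 : ∀ a b : ℝ, IntervalIntegrable (fun t => ‖u' t‖ ^ 2) volume a b) (a b : ℝ) :
    IntervalIntegrable u' volume a b := by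
  have hg : IntervalIntegrable (fun t => 1 + ‖u' t‖ ^ 2) volume a b :=
    intervalIntegrable_const.add (h2 a b)
  refine hg.mono_fun hm.restrict (ae_of_all _ fun t => ?_)
  have h0 : (0:ℝ) ≤ ‖u' t‖ := norm_nonneg _
  show ‖u' t‖ ≤ ‖1 + ‖u' t‖ ^ 2‖
  rw [Real.norm_eq_abs, abs_of_nonneg (by positivity)]
  nlinarith [sq_nonneg (‖u' t‖ - 1)]

lemma _root_.IsH1Loc.intInt {u u' : ℝ → ℂ} (h : IsH1Loc u u') (a b : ℝ) :
    IntervalIntegrable u' volume a b := intInt_of_sq h.1 h.2.1 a b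

lemma _root_.IsH1Loc.integral_der {u u' : ℝ → ℂ} (h : IsH1Loc u u') (a b : ℝ) :
    (∫ t in a..b, u' t) = u b - u a := by
  have key := intervalIntegral.integral_add_adjacent_intervals (h.intInt 0 a) (h.intInt a b)
  have ha := h.2.2 a
  have hb := h.2.2 b
  have : u a + (∫ t in a..b, u' t) = u b := by
    rw [ha, hb, ← key]; ring
  linear_combination this

lemma _root_.IsH1Loc.cont {u u' : ℝ → ℂ} (h : IsH1Loc u u') : Continuous u := by
  have hc : Continuous fun x : ℝ => u 0 + ∫ t in (0:ℝ)..x, u' t :=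
    continuous_const.add (intervalIntegral.continuous_primitive (fun a b => h.intInt a b) 0)
  exact hc.congr fun x => (h.2.2 x).symm


lemma isH1Loc_const_mul {u u' : ℝ → ℂ} (c : ℂ) (h : IsH1Loc u u') :
    IsH1Loc (fun y => c * u y) (fun y => c * u' y) := by
  refine ⟨(aestronglyMeasurable_const).mul h.1, fun a b => ?_, fun x => ?_⟩
  · have : (fun t => ‖c * u' t‖ ^ 2) = fun t => ‖c‖ ^ 2 * ‖u' t‖ ^ 2 := by
      funext t; rw [norm_mul, mul_pow]
    rw [this]
    exact (h.2.1 a b).const_mul _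
  · rw [intervalIntegral.integral_const_mul, ← mul_add, ← h.2.2 x]

lemma isH1Loc_comp_add {u u' : ℝ → ℂ} (h : IsH1Loc u u') (c : ℝ) :
    IsH1Loc (fun y => u (y + c)) (fun y => u' (y + c)) := by
  refine ⟨h.1.comp_quasiMeasurePreserving
      (measurePreserving_add_right volume c).quasiMeasurePreserving, fun a b => ?_, fun x => ?_⟩
  · simpa using (h.2.1 (a + c) (b + c)).comp_add_right c
  · have h1 : (∫ t in (0:ℝ)..x, u' (t + c)) = ∫ t in c..(x + c), u' t := by
      simpa using intervalIntegral.integral_comp_add_right (a := (0:ℝ)) (b := x) u' c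
    rw [h1, h.integral_der c (x + c)]
    show u (x + c) = u (0 + c) + (u (x + c) - u c)
    rw [zero_add]; ring

lemma isH1Loc_add {u u' w w' : ℝ → ℂ} (hu : IsH1Loc u u') (hw : IsH1Loc w w') :
    IsH1Loc (fun y => u y + w y) (fun y => u' y + w' y) := by
  refine ⟨hu.1.add hw.1, fun a b => ?_, fun x => ?_⟩
  · have hg : IntervalIntegrable (fun t => 2 * ‖u' t‖ ^ 2 + 2 * ‖w' t‖ ^ 2) volume a b :=
      ((hu.2.1 a b).const_mul 2).add ((hw.2.1 a b).const_mul 2)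
    refine hg.mono_fun ((hu.1.add hw.1).norm.pow 2).restrict (ae_of_all _ fun t => ?_)
    show ‖‖u' t + w' t‖ ^ 2‖ ≤ ‖2 * ‖u' t‖ ^ 2 + 2 * ‖w' t‖ ^ 2‖
    rw [Real.norm_eq_abs, Real.norm_eq_abs, abs_of_nonneg (by positivity),
      abs_of_nonneg (by positivity)]
    have h1 := norm_add_le (u' t) (w' t)
    nlinarith [norm_nonneg (u' t), norm_nonneg (w' t), norm_nonneg (u' t + w' t),
      sq_nonneg (‖u' t‖ - ‖w' t‖)]
  · rw [intervalIntegral.integral_add (hu.intInt 0 x) (hw.intInt 0 x)]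
    show u x + w x = (u 0 + w 0) + _
    rw [hu.2.2 x, hw.2.2 x]
    ring

lemma isH1Loc_zero : IsH1Loc (fun _ => (0:ℂ)) (fun _ => (0:ℂ)) := by
  refine ⟨aestronglyMeasurable_const, fun a b => ?_, fun x => by simp⟩
  simpa using (intervalIntegrable_const (c := (0:ℝ)) (a := a) (b := b) (μ := volume))

lemma isH1Loc_sum {ι : Type*} (s : Finset ι) (f f' : ι → ℝ → ℂ)
    (h : ∀ i ∈ s, IsH1Loc (f i) (f' i)) :
    IsH1Loc (fun y => ∑ i ∈ s, f i y) (fun y => ∑ i ∈ s, f' i y) := by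
  classical
  induction s using Finset.induction_on with
  | empty => simpa using isH1Loc_zero
  | insert a s hns ih =>
    simp only [Finset.sum_insert hns]
    exact isH1Loc_add (h a (Finset.mem_insert_self a s))
      (ih fun i hi => h i (Finset.mem_insert_of_mem hi))

lemma mem_F0_add_int {α β : ℝ} {y : ℝ} (n : ℤ) : y + (n:ℝ) ∈ F0 α β ↔ y ∈ F0 α β := by
  simp only [F0, mem_iUnion, mem_Ioo]
  constructor
  · rintro ⟨m, h1, h2⟩
    exact ⟨m - n, by push_cast; constructor <;> linarith⟩
  · rintro ⟨m, h1, h2⟩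
    exact ⟨m + n, by push_cast; constructor <;> linarith⟩

lemma mem_F1_add_int {α β : ℝ} {y : ℝ} (n : ℤ) : y + (n:ℝ) ∈ F1 α β ↔ y ∈ F1 α β := by
  simp only [F1, mem_iUnion, mem_union, mem_Ioo]
  constructor
  · rintro ⟨m, h⟩
    refine ⟨m - n, ?_⟩
    rcases h with h | h
    · exact Or.inl ⟨by push_cast; linarith [h.1], by push_cast; linarith [h.2]⟩
    · exact Or.inr ⟨by push_cast; linarith [h.1], by push_cast; linarith [h.2]⟩
  · rintro ⟨m, h⟩
    refine ⟨m + n, ?_⟩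
    rcases h with h | h
    · exact Or.inl ⟨by push_cast; linarith [h.1], by push_cast; linarith [h.2]⟩
    · exact Or.inr ⟨by push_cast; linarith [h.1], by push_cast; linarith [h.2]⟩

lemma ae_shift {P : ℝ → Prop} (h : ∀ᵐ y ∂(volume : Measure ℝ), P y) (c : ℝ) :
    ∀ᵐ y ∂(volume : Measure ℝ), P (y + c) :=
  (measurePreserving_add_right volume c).quasiMeasurePreserving.ae h

lemma locallyIntegrable_of_intInt {f : ℝ → ℂ}
    (hi : ∀ a b : ℝ, IntervalIntegrable f volume a b) :
    LocallyIntegrable f volume := by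
  refine locallyIntegrable_iff.2 fun K hK => ?_
  obtain ⟨R, hR0, hR⟩ := hK.isBounded.subset_closedBall_lt 0 0
  have h1 : IntegrableOn f (Icc (-R) R) volume :=
    (intervalIntegrable_iff_integrableOn_Icc_of_le (by linarith : (-R:ℝ) ≤ R)).1 (hi (-R) R)
  refine h1.mono_set (hR.trans ?_)
  rw [Real.closedBall_eq_Icc, zero_sub, zero_add]

lemma ae_zero_of_primitive_eq_zero {f : ℝ → ℂ}
    (hi : ∀ a b : ℝ, IntervalIntegrable f volume a b)
    (h0 : ∀ a b : ℝ, (∫ t in a..b, f t) = 0) :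
    ∀ᵐ x ∂(volume : Measure ℝ), f x = 0 := by
  have hloc := locallyIntegrable_of_intInt hi
  filter_upwards [IsUnifLocDoublingMeasure.ae_tendsto_average
    (μ := (volume : Measure ℝ)) hloc 1] with x hx
  have h1 : Filter.Tendsto (fun r : ℝ => ⨍ y in Metric.closedBall x r, f y)
      (nhdsWithin 0 (Ioi 0)) (nhds (f x)) := by
    refine hx (fun _ => x) id Filter.tendsto_id ?_
    filter_upwards [self_mem_nhdsWithin] with r hr
    have hr' : (0:ℝ) < r := hr
    simp only [Metric.mem_closedBall, dist_self, id_eq, one_mul]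
    linarith
  have h2 : (fun r : ℝ => ⨍ y in Metric.closedBall x r, f y)
      =ᶠ[nhdsWithin 0 (Ioi 0)] (fun _ => (0:ℂ)) := by
    filter_upwards [self_mem_nhdsWithin] with r hr
    have hr' : (0:ℝ) < r := hr
    have hint : (∫ y in Metric.closedBall x r, f y) = 0 := by
      rw [Real.closedBall_eq_Icc, MeasureTheory.integral_Icc_eq_integral_Ioc,
        ← intervalIntegral.integral_of_le (by linarith : x - r ≤ x + r)]
      exact h0 _ _
    rw [setAverage_eq, hint, smul_zero]
  exact tendsto_nhds_unique (h1.congr' h2) tendsto_const_nhds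

end StmtAux

theorem stmt_11 (α β : ℝ) (hα : 0 < α) (hαβ : α < β) (hβ : β < 1)
    (N : ℕ) (hN : 1 ≤ N) (j : ℕ) (hj : j ≤ N - 1) (θ : ℝ) (hθ : θ = (j : ℝ) / N)
    (p : ℝ → ℝ) (hpm : Measurable p) (hpper : ∀ y : ℝ, p (y + 1) = p y)
    (pmin pmax : ℝ) (hpmin : 0 < pmin)
    (hp : ∀ᵐ y ∂volume, pmin ≤ p y ∧ p y ≤ pmax)
    (lam : ℝ)
    (v v' : ℝ → ℂ) (hv : IsH1Loc v v')
    (hvq : ∀ y : ℝ, v (y + 1) = Complex.exp (2 * Real.pi * Complex.I * θ) * v y)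
    (heig : ∀ Φ Φ' : ℝ → ℂ, IsH1Loc Φ Φ' →
      (∀ y : ℝ, Φ (y + 1) = Complex.exp (2 * Real.pi * Complex.I * θ) * Φ y) →
      (∀ᵐ y ∂volume, y ∈ F1 α β → Φ' y = 0) →
      (∫ y in Ioo (0:ℝ) 1,
          (F0 α β).indicator (fun z => (p z : ℂ) * v' z * conj (Φ' z)) y) =
        (lam : ℂ) * ∫ y in Ioo (0:ℝ) 1, v y * conj (Φ y)) :
    ∀ φ φ' : ℝ → ℂ, IsH1Loc φ φ' →
      (∀ y : ℝ, φ (y + N) = φ y) →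
      (∀ᵐ y ∂volume, y ∈ F1 α β → φ' y = 0) →
      (∫ y in Ioo (0:ℝ) (N : ℝ),
          (F0 α β).indicator (fun z => (p z : ℂ) * v' z * conj (φ' z)) y) =
        (lam : ℂ) * ∫ y in Ioo (0:ℝ) (N : ℝ), v y * conj (φ y) := by

  classical
  intro φ φ' hφ hφper hφ1
  set e : ℂ := Complex.exp (2 * Real.pi * Complex.I * θ) with he_def
  have hNR : (0:ℝ) < N := by exact_mod_cast hN
  have hNne : (N:ℝ) ≠ 0 := ne_of_gt hNR
  have he0 : e ≠ 0 := Complex.exp_ne_zero _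
  -- e ^ N = 1
  have heN : e ^ N = 1 := by
    rw [he_def, ← Complex.exp_nat_mul]
    have hNneC : (N:ℂ) ≠ 0 := by exact_mod_cast hNne
    have h1 : (N:ℂ) * (2 * Real.pi * Complex.I * θ) = (j:ℂ) * (2 * Real.pi * Complex.I) := by
      rw [hθ]
      push_cast
      field_simp
    rw [h1]
    exact_mod_cast Complex.exp_int_mul_two_pi_mul_I (j : ℤ)
  have hconj_e : conj e = e⁻¹ := by
    rw [he_def, ← Complex.exp_conj, ← Complex.exp_neg]
    congr 1
    have hz : ((2:ℂ) * (Real.pi:ℝ) * Complex.I * (θ:ℝ)) = ((2*Real.pi*θ:ℝ):ℂ) * Complex.I := by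
      push_cast; ring
    rw [hz, map_mul, Complex.conj_ofReal, Complex.conj_I]
    push_cast; ring
  have hconjc : ∀ k : ℕ, conj ((e⁻¹) ^ k) = e ^ k := by
    intro k
    rw [map_pow, map_inv₀, hconj_e, inv_inv]
  have hc_succ : ∀ k : ℕ, e * (e⁻¹) ^ (k+1) = (e⁻¹) ^ k := by
    intro k
    rw [pow_succ]
    field_simp
  have hcN : (e⁻¹) ^ N = 1 := by rw [inv_pow, heN, inv_one]
  -- quasiperiodic test function
  set Φ : ℝ → ℂ := fun y => ∑ k ∈ Finset.range N, (e⁻¹) ^ k * φ (y + k) with hΦdef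
  set Φ' : ℝ → ℂ := fun y => ∑ k ∈ Finset.range N, (e⁻¹) ^ k * φ' (y + k) with hΦ'def
  have hΦH1 : IsH1Loc Φ Φ' := by
    rw [hΦdef, hΦ'def]
    exact StmtAux.isH1Loc_sum _ _ _ fun k _ =>
      StmtAux.isH1Loc_const_mul _ (StmtAux.isH1Loc_comp_add hφ (k:ℝ))
  -- pointwise quasiperiodicity facts
  have hvpow : ∀ (k : ℕ) (y : ℝ), v (y + (k:ℝ)) = e ^ k * v y := by
    intro k
    induction k with
    | zero => intro y; simp
    | succ n ih =>
      intro y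
      have hx : y + ((n+1 : ℕ):ℝ) = (y + n) + 1 := by push_cast; ring
      rw [hx, hvq, ih, pow_succ]
      ring
  have hppow : ∀ (k : ℕ) (y : ℝ), p (y + (k:ℝ)) = p y := by
    intro k
    induction k with
    | zero => intro y; simp
    | succ n ih =>
      intro y
      have hx : y + ((n+1 : ℕ):ℝ) = (y + n) + 1 := by push_cast; ring
      rw [hx, hpper, ih]
  -- a.e. quasiperiodicity of v'
  have hv'shift : ∀ᵐ y ∂(volume : Measure ℝ), v' (y + 1) = e * v' y := by
    have hv1 : IsH1Loc (fun y => v (y + 1)) (fun y => v' (y + 1)) :=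
      StmtAux.isH1Loc_comp_add hv 1
    have hkey : ∀ᵐ x ∂(volume : Measure ℝ), v' (x + 1) - e * v' x = 0 := by
      refine StmtAux.ae_zero_of_primitive_eq_zero (fun a b => ?_) (fun a b => ?_)
      · exact (hv1.intInt a b).sub ((hv.intInt a b).const_mul e)
      · rw [intervalIntegral.integral_sub (hv1.intInt a b) ((hv.intInt a b).const_mul e),
          intervalIntegral.integral_const_mul, hv1.integral_der a b, hv.integral_der a b]
        show v (b + 1) - v (a + 1) - e * (v b - v a) = 0
        rw [hvq a, hvq b]
        ring
    filter_upwards [hkey] with y hy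
    exact sub_eq_zero.1 hy
  have hv'pow : ∀ k : ℕ, ∀ᵐ y ∂(volume : Measure ℝ), v' (y + (k:ℝ)) = e ^ k * v' y := by
    intro k
    induction k with
    | zero => filter_upwards with y; simp
    | succ n ih =>
      have ih1 := StmtAux.ae_shift ih 1
      filter_upwards [ih1, hv'shift] with y h1 h2
      have hx : y + ((n+1 : ℕ):ℝ) = (y + 1) + (n:ℝ) := by push_cast; ring
      rw [hx, h1, h2, pow_succ]
      ring
  -- φ' vanishes on shifted F1
  have hφ'F1 : ∀ k : ℕ, ∀ᵐ y ∂(volume : Measure ℝ), y ∈ F1 α β → φ' (y + (k:ℝ)) = 0 := by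
    intro k
    have h1 := StmtAux.ae_shift hφ1 (k:ℝ)
    filter_upwards [h1] with y hy hyF1
    refine hy ?_
    have := (StmtAux.mem_F1_add_int (α := α) (β := β) (y := y) (k:ℤ)).2 hyF1
    simpa using this
  -- quasiperiodicity of Φ
  have hΦq : ∀ y : ℝ, Φ (y + 1) = e * Φ y := by
    intro y
    rw [hΦdef]
    show (∑ k ∈ Finset.range N, (e⁻¹) ^ k * φ (y + 1 + k)) = e * ∑ k ∈ Finset.range N, (e⁻¹) ^ k * φ (y + k)
    have h1 : ∀ k ∈ Finset.range N, (e⁻¹) ^ k * φ (y + 1 + (k:ℝ))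
        = e * ((fun m : ℕ => (e⁻¹) ^ m * φ (y + (m:ℝ))) (k+1)) := by
      intro k _
      have hx : y + 1 + (k:ℝ) = y + ((k+1:ℕ):ℝ) := by push_cast; ring
      rw [hx]
      show (e⁻¹) ^ k * φ (y + ((k+1:ℕ):ℝ)) = e * ((e⁻¹) ^ (k+1) * φ (y + ((k+1:ℕ):ℝ)))
      rw [← mul_assoc, hc_succ k]
    rw [Finset.sum_congr rfl h1, ← Finset.mul_sum]
    congr 1
    have hs := Finset.sum_range_succ' (fun m : ℕ => (e⁻¹) ^ m * φ (y + (m:ℝ))) N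
    have ht := Finset.sum_range_succ (fun m : ℕ => (e⁻¹) ^ m * φ (y + (m:ℝ))) N
    have hend : (e⁻¹) ^ N * φ (y + (N:ℝ)) = (e⁻¹) ^ 0 * φ (y + ((0:ℕ):ℝ)) := by
      rw [hcN, hφper y]
      simp
    have hcomb := hs.symm.trans ht
    simp only [Nat.cast_zero] at hcomb hend ⊢
    linear_combination hcomb + hend
  -- Φ' vanishes a.e. on F1
  have hΦF1 : ∀ᵐ y ∂(volume : Measure ℝ), y ∈ F1 α β → Φ' y = 0 := by
    have hall : ∀ᵐ y ∂(volume : Measure ℝ), ∀ k : ℕ, y ∈ F1 α β → φ' (y + (k:ℝ)) = 0 :=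
      (MeasureTheory.ae_all_iff).2 hφ'F1
    filter_upwards [hall] with y hy hyF1
    rw [hΦ'def]
    show (∑ k ∈ Finset.range N, (e⁻¹) ^ k * φ' (y + (k:ℝ))) = 0
    refine Finset.sum_eq_zero fun k _ => ?_
    rw [hy k hyF1, mul_zero]
  -- integrability of the indicator integrand
  have hPmax : ∀ᵐ y ∂(volume : Measure ℝ), |p y| ≤ |pmax| := by
    filter_upwards [hp] with y hy
    rw [abs_of_pos (lt_of_lt_of_le hpmin hy.1)]
    exact le_trans hy.2 (le_abs_self _)
  have hF0m : MeasurableSet (F0 α β) := MeasurableSet.iUnion fun n => measurableSet_Ioo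
  have hindInt : ∀ w' : ℝ → ℂ, AEStronglyMeasurable w' volume →
      (∀ a b : ℝ, IntervalIntegrable (fun t => ‖w' t‖ ^ 2) volume a b) →
      ∀ a b : ℝ, IntervalIntegrable
        (fun y => (F0 α β).indicator (fun z => (p z : ℂ) * v' z * conj (w' z)) y) volume a b := by
    intro w' hwm hw2 a b
    have hmeas : AEStronglyMeasurable
        (fun y => (F0 α β).indicator (fun z => (p z : ℂ) * v' z * conj (w' z)) y) volume := by
      refine AEStronglyMeasurable.indicator ?_ hF0m
      exact ((Complex.measurable_ofReal.comp hpm).aestronglyMeasurable.mul hv.1).mul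
        (Complex.continuous_conj.comp_aestronglyMeasurable hwm)
    have hg : IntervalIntegrable
        (fun t => |pmax| / 2 * (‖v' t‖ ^ 2 + ‖w' t‖ ^ 2)) volume a b :=
      ((hv.2.1 a b).add (hw2 a b)).const_mul _
    refine hg.mono_fun hmeas.restrict (ae_restrict_of_ae ?_)
    filter_upwards [hPmax] with t ht
    have h1 : ‖(F0 α β).indicator (fun z => (p z : ℂ) * v' z * conj (w' z)) t‖
        ≤ ‖(p t : ℂ) * v' t * conj (w' t)‖ := norm_indicator_le_norm_self _ _
    have h2 : ‖(p t : ℂ) * v' t * conj (w' t)‖ = |p t| * ‖v' t‖ * ‖w' t‖ := by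
      rw [norm_mul, norm_mul]
      simp
    show ‖(F0 α β).indicator (fun z => (p z : ℂ) * v' z * conj (w' z)) t‖
        ≤ ‖|pmax| / 2 * (‖v' t‖ ^ 2 + ‖w' t‖ ^ 2)‖
    have h3 : ‖|pmax| / 2 * (‖v' t‖ ^ 2 + ‖w' t‖ ^ 2)‖ = |pmax| / 2 * (‖v' t‖ ^ 2 + ‖w' t‖ ^ 2) := by
      rw [Real.norm_eq_abs, abs_of_nonneg (by positivity)]
    rw [h3]
    have h4 : |p t| * ‖v' t‖ * ‖w' t‖ ≤ |pmax| / 2 * (‖v' t‖ ^ 2 + ‖w' t‖ ^ 2) := by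
      nlinarith [abs_nonneg (p t), norm_nonneg (v' t), norm_nonneg (w' t),
        sq_nonneg (‖v' t‖ - ‖w' t‖), abs_nonneg pmax,
        mul_nonneg (norm_nonneg (v' t)) (norm_nonneg (w' t)),
        mul_le_mul_of_nonneg_right ht (mul_nonneg (norm_nonneg (v' t)) (norm_nonneg (w' t)))]
    calc ‖(F0 α β).indicator (fun z => (p z : ℂ) * v' z * conj (w' z)) t‖
        ≤ |p t| * ‖v' t‖ * ‖w' t‖ := by rw [← h2]; exact h1
      _ ≤ _ := h4
  -- conversions between Ioo-integrals and interval integrals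
  have hIoo : ∀ (g : ℝ → ℂ) (b : ℝ), (0:ℝ) ≤ b →
      (∫ y in Ioo (0:ℝ) b, g y) = ∫ y in (0:ℝ)..b, g y := by
    intro g b hb
    rw [intervalIntegral.integral_of_le hb, MeasureTheory.integral_Ioc_eq_integral_Ioo]
  -- shifted test derivative data
  have hφk : ∀ k : ℕ, IsH1Loc (fun y => φ (y + (k:ℝ))) (fun y => φ' (y + (k:ℝ))) :=
    fun k => StmtAux.isH1Loc_comp_add hφ (k:ℝ)
  -- abbreviation
  set G : ℕ → ℂ := fun k => ∫ y in (0:ℝ)..1,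
    (F0 α β).indicator (fun z => (p z : ℂ) * v' z * conj (φ' (z + (k:ℝ)))) y with hGdef
  -- Claim A
  have hA : (∫ y in Ioo (0:ℝ) (N:ℝ),
      (F0 α β).indicator (fun z => (p z : ℂ) * v' z * conj (φ' z)) y)
      = ∑ k ∈ Finset.range N, e ^ k * G k := by
    have hadj : (∫ x in (0:ℝ)..(N:ℝ),
        (F0 α β).indicator (fun z => (p z : ℂ) * v' z * conj (φ' z)) x)
        = ∑ k ∈ Finset.range N, ∫ x in ((k:ℝ))..((k:ℝ)+1),
            (F0 α β).indicator (fun z => (p z : ℂ) * v' z * conj (φ' z)) x := by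
      have h := (intervalIntegral.sum_integral_adjacent_intervals
        (a := fun k : ℕ => (k:ℝ)) (n := N) (μ := volume)
        (f := fun y => (F0 α β).indicator (fun z => (p z : ℂ) * v' z * conj (φ' z)) y)
        (fun k _ => hindInt φ' hφ.1 hφ.2.1 _ _)).symm
      simpa using h
    rw [hIoo _ _ (Nat.cast_nonneg N), hadj]
    refine Finset.sum_congr rfl fun k _ => ?_
    have hstep : (∫ x in ((k:ℝ))..((k:ℝ)+1),
        (F0 α β).indicator (fun z => (p z : ℂ) * v' z * conj (φ' z)) x)
        = ∫ x in (0:ℝ)..1,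
          (F0 α β).indicator (fun z => (p z : ℂ) * v' z * conj (φ' z)) (x + (k:ℝ)) := by
      rw [intervalIntegral.integral_comp_add_right
        (fun y => (F0 α β).indicator (fun z => (p z : ℂ) * v' z * conj (φ' z)) y) ((k:ℝ))]
      norm_num [add_comm]
    rw [hstep]
    have hcong : ∀ᵐ x ∂(volume : Measure ℝ),
        (F0 α β).indicator (fun z => (p z : ℂ) * v' z * conj (φ' z)) (x + (k:ℝ))
        = e ^ k * (F0 α β).indicator (fun z => (p z : ℂ) * v' z * conj (φ' (z + (k:ℝ)))) x := by
      filter_upwards [hv'pow k] with x hx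
      by_cases hmem : x ∈ F0 α β
      · have hmem' : x + (k:ℝ) ∈ F0 α β := by
          have := (StmtAux.mem_F0_add_int (α := α) (β := β) (y := x) (k:ℤ)).2 hmem
          simpa using this
        simp only [Set.indicator_of_mem hmem', Set.indicator_of_mem hmem]
        rw [hppow k x, hx]
        ring
      · have hmem' : x + (k:ℝ) ∉ F0 α β := by
          intro hc
          refine hmem ?_
          have := (StmtAux.mem_F0_add_int (α := α) (β := β) (y := x) (k:ℤ)).1 (by simpa using hc)
          exact this
        simp only [Set.indicator_of_notMem hmem', Set.indicator_of_notMem hmem, mul_zero]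
    rw [intervalIntegral.integral_congr_ae (hcong.mono fun x hx _ => hx),
      intervalIntegral.integral_const_mul]
  -- Claim B
  have hB : (∫ y in Ioo (0:ℝ) 1,
      (F0 α β).indicator (fun z => (p z : ℂ) * v' z * conj (Φ' z)) y)
      = ∑ k ∈ Finset.range N, e ^ k * G k := by
    rw [hIoo _ 1 zero_le_one]
    have hpt : ∀ y : ℝ, (F0 α β).indicator (fun z => (p z : ℂ) * v' z * conj (Φ' z)) y
        = ∑ k ∈ Finset.range N,
            e ^ k * (F0 α β).indicator (fun z => (p z : ℂ) * v' z * conj (φ' (z + (k:ℝ)))) y := by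
      intro y
      by_cases hmem : y ∈ F0 α β
      · simp only [Set.indicator_of_mem hmem]
        have hcj : conj (Φ' y) = ∑ k ∈ Finset.range N, e ^ k * conj (φ' (y + (k:ℝ))) := by
          rw [hΦ'def]
          show conj (∑ k ∈ Finset.range N, (e⁻¹) ^ k * φ' (y + (k:ℝ))) = _
          rw [map_sum]
          refine Finset.sum_congr rfl fun k _ => ?_
          rw [map_mul, hconjc]
        rw [hcj, Finset.mul_sum]
        refine Finset.sum_congr rfl fun k _ => ?_
        ring
      · simp only [Set.indicator_of_notMem hmem]
        simp
    have hsum := intervalIntegral.integral_finset_sum (μ := volume) (a := (0:ℝ)) (b := 1)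
      (s := Finset.range N)
      (f := fun (k : ℕ) (y : ℝ) =>
        e ^ k * (F0 α β).indicator (fun z => (p z : ℂ) * v' z * conj (φ' (z + (k:ℝ)))) y)
      (fun k _ => ((hindInt (fun z => φ' (z + (k:ℝ))) (hφk k).1 (hφk k).2.1 0 1).const_mul _))
    rw [intervalIntegral.integral_congr (fun x _ => hpt x), hsum]
    exact Finset.sum_congr rfl fun k _ => intervalIntegral.integral_const_mul _ _
  -- Claim C
  have hC : (∫ y in Ioo (0:ℝ) (N:ℝ), v y * conj (φ y))
      = ∑ k ∈ Finset.range N, ∫ y in (0:ℝ)..1, e ^ k * (v y * conj (φ (y + (k:ℝ)))) := by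
    have hcont : Continuous fun y => v y * conj (φ y) :=
      hv.cont.mul (Complex.continuous_conj.comp hφ.cont)
    have hadj : (∫ x in (0:ℝ)..(N:ℝ), v x * conj (φ x))
        = ∑ k ∈ Finset.range N, ∫ x in ((k:ℝ))..((k:ℝ)+1), v x * conj (φ x) := by
      have h := (intervalIntegral.sum_integral_adjacent_intervals
        (a := fun k : ℕ => (k:ℝ)) (n := N) (μ := volume) (f := fun y => v y * conj (φ y))
        (fun k _ => hcont.intervalIntegrable _ _)).symm
      simpa using h
    rw [hIoo _ _ (Nat.cast_nonneg N), hadj]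
    refine Finset.sum_congr rfl fun k _ => ?_
    have hstep : (∫ x in ((k:ℝ))..((k:ℝ)+1), v x * conj (φ x))
        = ∫ x in (0:ℝ)..1, v (x + (k:ℝ)) * conj (φ (x + (k:ℝ))) := by
      rw [intervalIntegral.integral_comp_add_right (fun y => v y * conj (φ y)) ((k:ℝ))]
      norm_num [add_comm]
    rw [hstep]
    refine intervalIntegral.integral_congr fun x _ => ?_
    rw [hvpow k x]
    ring
  -- Claim D
  have hD : (∫ y in Ioo (0:ℝ) 1, v y * conj (Φ y))
      = ∑ k ∈ Finset.range N, ∫ y in (0:ℝ)..1, e ^ k * (v y * conj (φ (y + (k:ℝ)))) := by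
    rw [hIoo _ 1 zero_le_one]
    have hpt : ∀ y : ℝ, v y * conj (Φ y)
        = ∑ k ∈ Finset.range N, e ^ k * (v y * conj (φ (y + (k:ℝ)))) := by
      intro y
      have hcj : conj (Φ y) = ∑ k ∈ Finset.range N, e ^ k * conj (φ (y + (k:ℝ))) := by
        rw [hΦdef]
        show conj (∑ k ∈ Finset.range N, (e⁻¹) ^ k * φ (y + (k:ℝ))) = _
        rw [map_sum]
        refine Finset.sum_congr rfl fun k _ => ?_
        rw [map_mul, hconjc]
      rw [hcj, Finset.mul_sum]
      refine Finset.sum_congr rfl fun k _ => ?_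
      ring
    have hsum := intervalIntegral.integral_finset_sum (μ := volume) (a := (0:ℝ)) (b := 1)
      (s := Finset.range N)
      (f := fun (k : ℕ) (y : ℝ) => e ^ k * (v y * conj (φ (y + (k:ℝ)))))
      (fun k _ => ((continuous_const.mul (hv.cont.mul (Complex.continuous_conj.comp
          (hφ.cont.comp (continuous_id.add continuous_const))))).intervalIntegrable _ _))
    rw [intervalIntegral.integral_congr (fun x _ => hpt x), hsum]
  rw [hA, hC, ← hB, ← hD]
  exact heig Φ Φ' hΦH1 hΦq hΦF1

end
end
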